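/- arXiv:1806.02147 — 8 statements merged into one kernel-verified Lean document; each statement's English description precedes it below -/
import Mathlib

section
/- Let S : ℕ → ℤ satisfy S 0 = 0 and |S n − S (n−1)| = 1 for every n ≥ 1, let M n = max over 0 ≤ m ≤ n of S m, and let W = M − S. Define (Tη) n = 1 if W n − W (n−1) = −1 and (Tη) n = 0 otherwise, and let TS : ℕ → ℤ be the path encoding of Tη, i.e. (TS) 0 = 0 and (TS) n − (TS)(n−1) = 1 − 2 (Tη) n. Then (TS) n = 2 M n − S n for every n ∈ ℕ. -/
/-- For a one-sided nearest-neighbour path `S` with running maximum `M` and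
carrier `W = M - S`, the path encoding `TS` of the one-step box-ball transformed configuration
satisfies Pitman's identity `(TS) n = 2 M n - S n`. -/
theorem stmt_1 (S : ℕ → ℤ) (hS0 : S 0 = 0)
    (hS : ∀ n : ℕ, 1 ≤ n → |S n - S (n - 1)| = 1)
    (M : ℕ → ℤ) (hM : ∀ n : ℕ, M n = (Finset.Iic n).sup' Finset.nonempty_Iic S)
    (W : ℕ → ℤ) (hW : ∀ n : ℕ, W n = M n - S n)
    (Tη : ℕ → ℤ)
    (hTη : ∀ n : ℕ, 1 ≤ n → Tη n = if W n - W (n - 1) = -1 then 1 else 0)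
    (TS : ℕ → ℤ) (hTS0 : TS 0 = 0)
    (hTS : ∀ n : ℕ, 1 ≤ n → TS n - TS (n - 1) = 1 - 2 * Tη n) :
    ∀ n : ℕ, TS n = 2 * M n - S n := by
  have hMS : ∀ m : ℕ, S m ≤ M m := by
    intro m; rw [hM]; exact Finset.le_sup' S (Finset.mem_Iic.mpr le_rfl)
  have hMrec : ∀ m : ℕ, M (m + 1) = max (M m) (S (m + 1)) := by
    intro m
    apply le_antisymm
    · rw [hM]
      apply Finset.sup'_le
      intro k hk
      rcases Nat.lt_or_ge k (m + 1) with hk' | hk'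
      · exact le_max_of_le_left
          (by rw [hM]; exact Finset.le_sup' S (Finset.mem_Iic.mpr (by omega)))
      · have hkm : k = m + 1 := by have := Finset.mem_Iic.mp hk; omega
        subst hkm; exact le_max_right _ _
    · refine max_le ?_ (hMS _)
      rw [hM (m + 1), hM m]
      apply Finset.sup'_le
      intro k hk
      exact Finset.le_sup' S
        (Finset.mem_Iic.mpr (by have := Finset.mem_Iic.mp hk; omega))
  intro n
  induction n with
  | zero =>
    have hM0 : M 0 = 0 := by
      have h1 := hMS 0
      have h2 : M 0 ≤ S 0 := by
        rw [hM]
        exact Finset.sup'_le _ _ fun m hm => by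
          rw [Nat.le_zero.mp (Finset.mem_Iic.mp hm)]
      omega
    omega
  | succ m ih =>
    have hstep := hS (m + 1) (by omega)
    have hT := hTη (m + 1) (by omega)
    have hTSs := hTS (m + 1) (by omega)
    simp only [Nat.add_sub_cancel] at hstep hT hTSs
    have hMr := hMrec m
    have hMSm := hMS m
    have hWm := hW m; have hWm1 := hW (m + 1)
    rcases (abs_eq (by norm_num : (0:ℤ) ≤ 1)).mp hstep with h | h
    · rcases le_or_gt (S (m + 1)) (M m) with hle | hlt
      · have hMeq : M (m + 1) = M m := by rw [hMr]; exact max_eq_left hle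
        have hc : W (m + 1) - W m = -1 := by rw [hWm1, hWm, hMeq]; linarith
        rw [hT] at hTSs; simp [hc] at hTSs; omega
      · have hMeq : M (m + 1) = S (m + 1) := by rw [hMr]; exact max_eq_right hlt.le
        have hc : W (m + 1) - W m ≠ -1 := by rw [hWm1, hWm, hMeq]; intro hcon; linarith
        rw [hT] at hTSs; rw [if_neg hc] at hTSs; omega
    · have hMeq : M (m + 1) = M m := by rw [hMr]; apply max_eq_left; omega
      have hc : W (m + 1) - W m ≠ -1 := by rw [hWm1, hWm, hMeq]; intro hcon; linarith
      rw [hT] at hTSs; rw [if_neg hc] at hTSs; omega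
end

section
/- Let η : ℤ → {0,1} be a particle configuration whose path encoding S lies in 𝒮^T, and let W n = M n − S n be its carrier. Then the transformed configuration satisfies (Tη) n = min(1 − η n, W (n−1)) for every n ∈ ℤ. -/
/-- The past maximum `M n = sup_{m ≤ n} S m` of a two-sided path. -/
noncomputable def ballMax (S : ℤ → ℤ) (n : ℤ) : ℤ := sSup (S '' Set.Iic n)

lemma iic_insert (n : ℤ) : Set.Iic n = insert n (Set.Iic (n - 1)) := by
  ext x; simp; omega

lemma bdd_all (S : ℤ → ℤ) (hBdd : BddAbove (S '' Set.Iic 0)) :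
    ∀ n : ℤ, BddAbove (S '' Set.Iic n) := by
  intro n
  induction n using Int.induction_on with
  | zero => exact hBdd
  | succ k ih =>
      rw [iic_insert (k + 1 : ℤ)]
      simp only [add_sub_cancel_right, Set.image_insert_eq]
      exact ih.insert _
  | pred k ih =>
      exact ih.mono (Set.image_mono (Set.Iic_subset_Iic.mpr (by omega)))

lemma ballMax_rec (S : ℤ → ℤ) (hBdd : BddAbove (S '' Set.Iic 0)) (n : ℤ) :
    ballMax S n = max (S n) (ballMax S (n - 1)) := by
  unfold ballMax
  rw [iic_insert n, Set.image_insert_eq,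
    csSup_insert (bdd_all S hBdd (n - 1)) ((Set.nonempty_Iic).image S)]

lemma le_ballMax (S : ℤ → ℤ) (hBdd : BddAbove (S '' Set.Iic 0)) (n : ℤ) :
    S n ≤ ballMax S n :=
  le_csSup (bdd_all S hBdd n) ⟨n, le_refl n, rfl⟩

/-- For a two-sided particle configuration `η` whose path encoding `S` lies in
`𝒮^T` (i.e. `{S n : n ≤ 0}` is bounded above), with carrier `W = M - S` and transformed
configuration `Tη` read off from the Pitman transform `TS = 2M - S - 2 M 0`, one has the
box-ball update rule `(Tη) n = min (1 - η n) (W (n-1))`. -/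
theorem stmt_2 (S : ℤ → ℤ) (hS0 : S 0 = 0)
    (hS : ∀ n : ℤ, |S n - S (n - 1)| = 1)
    (hBdd : BddAbove (S '' Set.Iic 0))
    (η W TS Tη : ℤ → ℤ)
    (hη : ∀ n : ℤ, η n = if S n - S (n - 1) = -1 then 1 else 0)
    (hW : ∀ n : ℤ, W n = ballMax S n - S n)
    (hTS : ∀ n : ℤ, TS n = 2 * ballMax S n - S n - 2 * ballMax S 0)
    (hTη : ∀ n : ℤ, Tη n = if TS n - TS (n - 1) = -1 then 1 else 0) :
    ∀ n : ℤ, Tη n = min (1 - η n) (W (n - 1)) := by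
  intro n
  have hd : S n - S (n - 1) = 1 ∨ S n - S (n - 1) = -1 := by
    have := hS n; rcases abs_cases (S n - S (n - 1)) with ⟨h, _⟩ | ⟨h, _⟩ <;> omega
  have hrec := ballMax_rec S hBdd n
  have hle := le_ballMax S hBdd (n - 1)
  have hTSd : TS n - TS (n - 1) =
      2 * ballMax S n - 2 * ballMax S (n - 1) - (S n - S (n - 1)) := by
    rw [hTS n, hTS (n - 1)]; ring
  rw [hTη n, hη n, hW (n - 1)]
  rcases hd with h1 | h1
  · -- upward step
    rw [if_neg (show ¬(S n - S (n-1) = -1) by omega)]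
    rcases lt_or_eq_of_le hle with hlt | heq
    · -- W (n-1) ≥ 1 : max is ballMax S (n-1)
      have hM : ballMax S n = ballMax S (n - 1) := by
        rw [hrec]; exact max_eq_right (by omega)
      rw [if_pos (show TS n - TS (n-1) = -1 by omega)]
      omega
    · -- W (n-1) = 0 : max is S n
      have hM : ballMax S n = S n := by
        rw [hrec]; exact max_eq_left (by omega)
      rw [if_neg (show ¬(TS n - TS (n-1) = -1) by omega)]
      omega
  · -- downward step
    have hM : ballMax S n = ballMax S (n - 1) := by
      rw [hrec]; exact max_eq_right (by omega)
    rw [if_neg (show ¬(TS n - TS (n-1) = -1) by omega), if_pos h1]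
    omega
end

section
/- Let S ∈ 𝒮⁰ be such that the set {S n : n ≤ 0} is NOT bounded above, and let η be the corresponding particle configuration. Then: (i) there exists no Y ∈ 𝒴 with Φ Y = S; (ii) for the truncated configurations η^{[k]} defined by η^{[k]} n = η n if n > k and 0 otherwise, the transformed configurations converge pointwise to 1 − η as k → −∞, i.e. for every n ∈ ℤ there exists k₀ such that (T η^{[k]}) n = 1 − η n for all k ≤ k₀. -/
/-- Pitman's transform `(TS) n = 2 M n - S n - 2 M 0`. -/
noncomputable def Tbb (S : ℤ → ℤ) : ℤ → ℤ := fun n => 2 * ballMax S n - S n - 2 * ballMax S 0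

/-- If `S ∈ 𝒮⁰` has `{S n : n ≤ 0}` unbounded above, then (i) there is no
carrier `Y ∈ 𝒴` with `Φ Y = S`; and (ii) the box-ball transforms of the truncated
configurations `η^{[k]}` converge pointwise to `1 - η` as `k → -∞`.  Here `Sk k` is the path
encoding of the truncation `η^{[k]}` and `Tηk k` is its box-ball transform. -/
theorem stmt_3 (S : ℤ → ℤ) (hS0 : S 0 = 0)
    (hS : ∀ n : ℤ, |S n - S (n - 1)| = 1)
    (hUnbdd : ¬ BddAbove (S '' Set.Iic 0))
    (η : ℤ → ℤ) (hη : ∀ n : ℤ, η n = if S n - S (n - 1) = -1 then 1 else 0)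
    (Sk : ℤ → ℤ → ℤ)
    (hSk0 : ∀ k : ℤ, Sk k 0 = 0)
    (hSkstep : ∀ k n : ℤ, Sk k n - Sk k (n - 1) = 1 - 2 * (if k < n then η n else 0))
    (Tηk : ℤ → ℤ → ℤ)
    (hTηk : ∀ k n : ℤ, Tηk k n = if Tbb (Sk k) n - Tbb (Sk k) (n - 1) = -1 then 1 else 0) :
    (¬ ∃ Y : ℤ → ℤ, (∀ n : ℤ, 0 ≤ Y n) ∧
        (∀ n : ℤ, |Y n - Y (n - 1)| = 1 ∨ (Y n = 0 ∧ Y (n - 1) = 0)) ∧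
        (∀ n : ℤ, S n - S (n - 1) = if Y n = Y (n - 1) + 1 then -1 else 1)) ∧
    (∀ n : ℤ, ∃ k₀ : ℤ, ∀ k : ℤ, k ≤ k₀ → Tηk k n = 1 - η n) := by
  -- basic facts about steps of S and η
  have hstep : ∀ n : ℤ, S n - S (n - 1) = 1 - 2 * η n := by
    intro n
    have h1 := hS n
    have h2 := hη n
    rcases abs_eq (by norm_num : (0:ℤ) ≤ 1) |>.mp h1 with h | h
    · rw [h2, if_neg (by omega)]; omega
    · rw [h2, if_pos h]; omega
  have hη01 : ∀ n : ℤ, η n = 0 ∨ η n = 1 := by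
    intro n
    rw [hη n]
    split <;> simp
  constructor
  · -- Part (i)
    rintro ⟨Y, hY0, hYstep, hΦ⟩
    -- S n + Y n is nondecreasing
    have hmono : ∀ m : ℤ, m ≤ 0 → S m + Y m ≤ S 0 + Y 0 := by
      intro m hm
      refine Int.le_induction_down (motive := fun m _ => S m + Y m ≤ S 0 + Y 0) le_rfl (fun n _ ih => ?_) m hm
      have h1 := hΦ n
      have h2 := hYstep n
      by_cases hc : Y n = Y (n - 1) + 1
      · rw [if_pos hc] at h1; omega
      · rw [if_neg hc] at h1
        rcases h2 with h2 | h2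
        · rcases (abs_eq (by norm_num : (0:ℤ) ≤ 1)).mp h2 with h | h <;> omega
        · omega
    apply hUnbdd
    refine ⟨Y 0, ?_⟩
    rintro x ⟨m, hm, rfl⟩
    have := hmono m hm
    have := hY0 m
    omega
  · -- Part (ii)
    intro n
    -- Sk k agrees with S above k (for k ≤ 0)
    have hSkS : ∀ k : ℤ, k ≤ 0 → ∀ m : ℤ, k ≤ m → Sk k m = Sk k k + (S m - S k) := by
      intro k hk m hm
      refine Int.le_induction (motive := fun m _ => Sk k m = Sk k k + (S m - S k)) (by ring) (fun p hp ih => ?_) m hm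
      have h1 := hSkstep k (p + 1)
      rw [if_pos (by omega)] at h1
      have h2 := hstep (p + 1)
      simp only [add_sub_cancel_right] at h1 h2
      omega
    have hSkeq : ∀ k : ℤ, k ≤ 0 → ∀ m : ℤ, k ≤ m → Sk k m = S m := by
      intro k hk m hm
      have h0 := hSkS k hk 0 hk
      have hm' := hSkS k hk m hm
      rw [hSk0 k, hS0] at h0
      omega
    -- below k, Sk k decreases linearly going left
    have hSkbelow : ∀ k : ℤ, ∀ m : ℤ, m ≤ k → Sk k m = Sk k k + (m - k) := by
      intro k m hm
      refine Int.le_induction_down (motive := fun m _ => Sk k m = Sk k k + (m - k)) (by ring) (fun p hp ih => ?_) m hm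
      have h1 := hSkstep k p
      rw [if_neg (by omega)] at h1
      omega
    -- find a high point in the past
    have hUn : ¬ BddAbove (S '' Set.Iic (n - 1)) := by
      intro hbdd
      apply hUnbdd
      by_cases hn : n - 1 < 0
      · have hsub : S '' Set.Iic 0 ⊆ S '' Set.Iic (n - 1) ∪ S '' Set.Icc n 0 := by
          rintro x ⟨m, hm, rfl⟩
          rcases le_or_gt m (n - 1) with h | h
          · exact Or.inl ⟨m, h, rfl⟩
          · exact Or.inr ⟨m, ⟨by omega, hm⟩, rfl⟩
        exact (hbdd.union ((Set.finite_Icc n 0).image S).bddAbove).mono hsub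
      · exact hbdd.mono (Set.image_mono (Set.Iic_subset_Iic.mpr (by omega)))
    obtain ⟨x, hx⟩ := not_bddAbove_iff.mp hUn (S n)
    obtain ⟨⟨m, hm, rfl⟩, hSm⟩ := hx
    refine ⟨min m 0, fun k hk => ?_⟩
    have hkm : k ≤ m := le_trans hk (min_le_left _ _)
    have hk0 : k ≤ 0 := le_trans hk (min_le_right _ _)
    have hkn : k ≤ n - 1 := le_trans hkm hm
    -- boundedness of the image up to any p ≥ k
    have hBdd : ∀ p : ℤ, k ≤ p → BddAbove (Sk k '' Set.Iic p) := by
      intro p hp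
      have hsub : Sk k '' Set.Iic p ⊆ Set.Iic (Sk k k) ∪ Sk k '' Set.Icc k p := by
        rintro x ⟨q, hq, rfl⟩
        rcases le_or_gt q k with h | h
        · exact Or.inl (by simp [Set.mem_Iic]; have := hSkbelow k q h; omega)
        · exact Or.inr ⟨q, ⟨le_of_lt h, hq⟩, rfl⟩
      exact (bddAbove_Iic.union ((Set.finite_Icc k p).image _).bddAbove).mono hsub
    -- Sk k n ≤ ballMax (Sk k) (n-1)
    have hle : Sk k n ≤ ballMax (Sk k) (n - 1) := by
      rcases hη01 n with h0 | h1
      · -- η n = 0 : S n ≤ S m ≤ M (n-1)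
        have h1 : Sk k n = S n := hSkeq k hk0 n (by omega)
        have h2 : Sk k m = S m := hSkeq k hk0 m hkm
        have h3 : Sk k m ≤ ballMax (Sk k) (n - 1) :=
          le_csSup (hBdd (n - 1) hkn) ⟨m, hm, rfl⟩
        omega
      · -- η n = 1 : Sk k n = Sk k (n-1) - 1
        have h2 := hSkstep k n
        rw [if_pos (by omega)] at h2
        have h3 : Sk k (n - 1) ≤ ballMax (Sk k) (n - 1) :=
          le_csSup (hBdd (n - 1) hkn) ⟨n - 1, Set.mem_Iic.mpr le_rfl, rfl⟩
        omega
    -- hence ballMax (Sk k) n = ballMax (Sk k) (n - 1)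
    have hIic : Set.Iic n = insert n (Set.Iic (n - 1)) := by
      ext x; simp [Set.mem_Iic]; omega
    have hMeq : ballMax (Sk k) n = ballMax (Sk k) (n - 1) := by
      unfold ballMax
      rw [hIic, Set.image_insert_eq,
        csSup_insert (hBdd (n - 1) hkn) ⟨Sk k (n - 1), n - 1, Set.mem_Iic.mpr le_rfl, rfl⟩]
      exact sup_eq_right.mpr hle
    -- compute the transform step
    have hTstep : Tbb (Sk k) n - Tbb (Sk k) (n - 1) = 2 * η n - 1 := by
      have h2 := hSkstep k n
      rw [if_pos (by omega)] at h2
      simp only [Tbb]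
      rw [hMeq]
      omega
    rw [hTηk k n, hTstep]
    rcases hη01 n with h0 | h1
    · rw [if_pos (by omega), h0]; norm_num
    · rw [if_neg (by omega), h1]; norm_num
end

section
/- For every S ∈ 𝒮^T, the transformed path T S lies in 𝒮^{T⁻¹}, and T⁻¹(T S) = S if and only if limsup_{n→+∞} S n = sup_{n∈ℤ} S n (as elements of ℤ ∪ {+∞}). Dually, for every S ∈ 𝒮^{T⁻¹}, T⁻¹ S lies in 𝒮^T, and T(T⁻¹ S) = S if and only if liminf_{n→−∞} S n = inf_{n∈ℤ} S n. Consequently, the set of S ∈ 𝒮⁰ on which T S and T⁻¹ S are both defined and T⁻¹(T S) = S = T(T⁻¹ S) equals {S ∈ 𝒮⁰ : {S n : n ≤ 0} is bounded above, {S n : n ≥ 0} is bounded below, limsup_{n→+∞} S n = sup_{n∈ℤ} S n, and liminf_{n→−∞} S n = inf_{n∈ℤ} S n}. -/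
/-- The future minimum `I n = inf_{m ≥ n} S m` of a two-sided path. -/
noncomputable def ballMin (S : ℤ → ℤ) (n : ℤ) : ℤ := sInf (S '' Set.Ici n)

/-- The inverse transform `(T⁻¹S) n = 2 I n - S n - 2 I 0`. -/
noncomputable def TbbInv (S : ℤ → ℤ) : ℤ → ℤ := fun n => 2 * ballMin S n - S n - 2 * ballMin S 0

/-- `S ∈ 𝒮⁰`: a two-sided nearest-neighbour path started at `0`. -/
def inS0 (S : ℤ → ℤ) : Prop := S 0 = 0 ∧ ∀ n : ℤ, |S n - S (n - 1)| = 1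

/-- `limsup_{n → +∞} S n = sup_{n ∈ ℤ} S n`, as elements of `ℤ ∪ {+∞}` (via `EReal`). -/
def limsupEq (S : ℤ → ℤ) : Prop :=
  Filter.limsup (fun n : ℤ => ((S n : ℝ) : EReal)) Filter.atTop = ⨆ n : ℤ, ((S n : ℝ) : EReal)

/-- `liminf_{n → -∞} S n = inf_{n ∈ ℤ} S n`, as elements of `ℤ ∪ {-∞}` (via `EReal`). -/
def liminfEq (S : ℤ → ℤ) : Prop :=
  Filter.liminf (fun n : ℤ => ((S n : ℝ) : EReal)) Filter.atBot = ⨅ n : ℤ, ((S n : ℝ) : EReal)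

namespace Stmt6Aux

open Set Filter

variable {S : ℤ → ℤ}

lemma neIic (S : ℤ → ℤ) (n : ℤ) : (S '' Set.Iic n).Nonempty := ⟨S n, n, le_refl n, rfl⟩

lemma neIci (S : ℤ → ℤ) (n : ℤ) : (S '' Set.Ici n).Nonempty := ⟨S n, n, le_refl n, rfl⟩

lemma bddAbove_all (hB : BddAbove (S '' Set.Iic 0)) (n : ℤ) : BddAbove (S '' Set.Iic n) := by
  have hsub : S '' Set.Iic n ⊆ (S '' Set.Iic 0) ∪ (S '' Set.Icc 0 n) := by
    rintro y ⟨m, hm, rfl⟩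
    rcases le_or_gt m 0 with h | h
    · exact Or.inl ⟨m, h, rfl⟩
    · exact Or.inr ⟨m, ⟨h.le, hm⟩, rfl⟩
  exact BddAbove.mono hsub (hB.union ((Set.finite_Icc 0 n).image S).bddAbove)

lemma bddBelow_all (hB : BddBelow (S '' Set.Ici 0)) (n : ℤ) : BddBelow (S '' Set.Ici n) := by
  have hsub : S '' Set.Ici n ⊆ (S '' Set.Ici 0) ∪ (S '' Set.Icc n 0) := by
    rintro y ⟨m, hm, rfl⟩
    rcases le_or_gt m 0 with h | h
    · exact Or.inr ⟨m, ⟨hm, h⟩, rfl⟩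
    · exact Or.inl ⟨m, h.le, rfl⟩
  exact BddBelow.mono hsub (hB.union ((Set.finite_Icc n 0).image S).bddBelow)

lemma le_ballMax (hB : BddAbove (S '' Set.Iic 0)) {m n : ℤ} (h : m ≤ n) :
    S m ≤ ballMax S n :=
  le_csSup (bddAbove_all hB n) ⟨m, h, rfl⟩

lemma ballMax_le {n c : ℤ} (h : ∀ m, m ≤ n → S m ≤ c) : ballMax S n ≤ c :=
  csSup_le (neIic S n) (by rintro y ⟨m, hm, rfl⟩; exact h m hm)

lemma ballMax_mem (hB : BddAbove (S '' Set.Iic 0)) (n : ℤ) :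
    ∃ t, t ≤ n ∧ S t = ballMax S n := by
  have := Int.csSup_mem (neIic S n) (bddAbove_all hB n)
  obtain ⟨t, ht, h⟩ := this
  exact ⟨t, ht, h⟩

lemma ballMax_mono (hB : BddAbove (S '' Set.Iic 0)) {m n : ℤ} (h : m ≤ n) :
    ballMax S m ≤ ballMax S n :=
  ballMax_le (fun k hk => le_ballMax hB (hk.trans h))

lemma ballMax_succ (hB : BddAbove (S '' Set.Iic 0)) (n : ℤ) :
    ballMax S (n + 1) = max (ballMax S n) (S (n + 1)) := by
  apply le_antisymm
  · apply ballMax_le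
    intro m hm
    rcases le_or_gt m n with h | h
    · exact le_max_of_le_left (le_ballMax hB h)
    · have hmn : m = n + 1 := by omega
      subst hmn
      exact le_max_right _ _
  · exact max_le (ballMax_mono hB (by omega)) (le_ballMax hB le_rfl)

lemma ballMin_le (hB : BddBelow (S '' Set.Ici 0)) {m n : ℤ} (h : n ≤ m) :
    ballMin S n ≤ S m :=
  csInf_le (bddBelow_all hB n) ⟨m, h, rfl⟩

lemma le_ballMin {n c : ℤ} (h : ∀ m, n ≤ m → c ≤ S m) : c ≤ ballMin S n :=
  le_csInf (neIci S n) (by rintro y ⟨m, hm, rfl⟩; exact h m hm)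

lemma ballMin_mem (hB : BddBelow (S '' Set.Ici 0)) (n : ℤ) :
    ∃ t, n ≤ t ∧ S t = ballMin S n := by
  have := Int.csInf_mem (neIci S n) (bddBelow_all hB n)
  obtain ⟨t, ht, h⟩ := this
  exact ⟨t, ht, h⟩

lemma ballMin_mono (hB : BddBelow (S '' Set.Ici 0)) {m n : ℤ} (h : m ≤ n) :
    ballMin S m ≤ ballMin S n :=
  le_ballMin (fun k hk => ballMin_le hB (h.trans hk))

lemma ballMin_pred (hB : BddBelow (S '' Set.Ici 0)) (n : ℤ) :
    ballMin S (n - 1) = min (S (n - 1)) (ballMin S n) := by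
  apply le_antisymm
  · exact le_min (ballMin_le hB le_rfl) (ballMin_mono hB (by omega))
  · apply le_ballMin
    intro m hm
    rcases le_or_gt n m with h | h
    · exact (min_le_right _ _).trans (ballMin_le hB h)
    · have hmn : m = n - 1 := by omega
      subst hmn
      exact min_le_left _ _

lemma step (hS : inS0 S) (n : ℤ) : S n = S (n - 1) + 1 ∨ S n = S (n - 1) - 1 := by
  have h := hS.2 n
  rcases (abs_eq (by norm_num : (0:ℤ) ≤ 1)).mp h with h' | h' <;> omega

lemma habs : ∀ a : ℤ, a = 1 ∨ a = -1 → |a| = 1 := by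
  rintro a (rfl | rfl) <;> decide

lemma inS0_Tbb (hS : inS0 S) (hB : BddAbove (S '' Set.Iic 0)) : inS0 (Tbb S) := by
  constructor
  · show 2 * ballMax S 0 - S 0 - 2 * ballMax S 0 = 0
    rw [hS.1]; ring
  · intro n
    have hstep := step hS n
    have hsp := ballMax_succ hB (n - 1)
    have e : n - 1 + 1 = n := by omega
    rw [e] at hsp
    have hprev : S (n - 1) ≤ ballMax S (n - 1) := le_ballMax hB le_rfl
    show |(2 * ballMax S n - S n - 2 * ballMax S 0) -
        (2 * ballMax S (n - 1) - S (n - 1) - 2 * ballMax S 0)| = 1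
    apply habs
    rcases le_total (S n) (ballMax S (n - 1)) with h2 | h2
    · rw [max_eq_left h2] at hsp; omega
    · rw [max_eq_right h2] at hsp; omega

lemma Tbb_lb (hB : BddAbove (S '' Set.Iic 0)) {n m : ℤ} (h : n ≤ m) :
    ballMax S n - 2 * ballMax S 0 ≤ Tbb S m := by
  have h1 : ballMax S n ≤ ballMax S m := ballMax_mono hB h
  have h2 : S m ≤ ballMax S m := le_ballMax hB le_rfl
  show _ ≤ 2 * ballMax S m - S m - 2 * ballMax S 0
  omega

lemma bddBelow_Tbb (hB : BddAbove (S '' Set.Iic 0)) (n : ℤ) :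
    BddBelow (Tbb S '' Set.Ici n) := by
  refine ⟨ballMax S n - 2 * ballMax S 0, ?_⟩
  rintro y ⟨m, hm, rfl⟩
  exact Tbb_lb hB hm

/-- Records at arbitrarily large times. -/
def Rec (S : ℤ → ℤ) : Prop := ∀ N : ℤ, ∃ m, N ≤ m ∧ S m = ballMax S m

/-- Records at arbitrarily negative times. -/
def RecInf (S : ℤ → ℤ) : Prop := ∀ N : ℤ, ∃ m, m ≤ N ∧ S m = ballMin S m

lemma rec_pull (hS : inS0 S) (hB : BddAbove (S '' Set.Iic 0)) :
    ∀ (k : ℕ) (n : ℤ), S (n + k) = ballMax S (n + k) →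
      ∃ m, n ≤ m ∧ S m = ballMax S m ∧ ballMax S m = ballMax S n := by
  intro k
  induction k with
  | zero =>
    intro n h
    exact ⟨n, le_rfl, by simpa using h, rfl⟩
  | succ k ih =>
    intro n h
    by_cases hn : S n = ballMax S n
    · exact ⟨n, le_rfl, hn, rfl⟩
    · have hle : S n ≤ ballMax S n := le_ballMax hB le_rfl
      have hstep := step hS (n + 1)
      have e : n + 1 - 1 = n := by omega
      rw [e] at hstep
      have hsp := ballMax_succ hB n
      have hM : ballMax S (n + 1) = ballMax S n := by
        rw [hsp]; exact max_eq_left (by omega)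
      have h' : S ((n + 1) + (k : ℤ)) = ballMax S ((n + 1) + (k : ℤ)) := by
        have e2 : (n + 1) + (k : ℤ) = n + ((k + 1 : ℕ) : ℤ) := by push_cast; ring
        rw [e2]; exact h
      obtain ⟨m, hm, h1, h2⟩ := ih (n + 1) h'
      exact ⟨m, by omega, h1, h2.trans hM⟩

lemma ballMin_Tbb_eq (hS : inS0 S) (hB : BddAbove (S '' Set.Iic 0)) (hrec : Rec S) (n : ℤ) :
    ballMin (Tbb S) n = ballMax S n - 2 * ballMax S 0 := by
  apply le_antisymm
  · obtain ⟨m0, hm0, hr⟩ := hrec n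
    obtain ⟨m, hm, h1, h2⟩ := rec_pull hS hB (m0 - n).toNat n
      (by rw [show n + ((m0 - n).toNat : ℤ) = m0 by omega]; exact hr)
    have hval : Tbb S m = ballMax S n - 2 * ballMax S 0 := by
      show 2 * ballMax S m - S m - 2 * ballMax S 0 = _
      omega
    calc ballMin (Tbb S) n ≤ Tbb S m := csInf_le (bddBelow_Tbb hB n) ⟨m, hm, rfl⟩
      _ = _ := hval
  · exact le_csInf (neIci _ n) (by rintro y ⟨m, hm, rfl⟩; exact Tbb_lb hB hm)

lemma TbbInv_Tbb (hS : inS0 S) (hB : BddAbove (S '' Set.Iic 0)) (hrec : Rec S) :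
    TbbInv (Tbb S) = S := by
  funext n
  show 2 * ballMin (Tbb S) n - Tbb S n - 2 * ballMin (Tbb S) 0 = S n
  rw [ballMin_Tbb_eq hS hB hrec n, ballMin_Tbb_eq hS hB hrec 0]
  show 2 * (ballMax S n - 2 * ballMax S 0) - (2 * ballMax S n - S n - 2 * ballMax S 0) -
      2 * (ballMax S 0 - 2 * ballMax S 0) = S n
  ring

lemma flatMax (hB : BddAbove (S '' Set.Iic 0)) {N : ℤ}
    (hN : ∀ m, N ≤ m → S m ≠ ballMax S m) :
    ∀ m, N ≤ m → ballMax S m = ballMax S N := by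
  intro m hm
  refine Int.le_induction (motive := fun m _ => ballMax S m = ballMax S N) rfl (fun n hn ih => ?_) m hm
  have hsp := ballMax_succ hB n
  rcases le_or_gt (S (n + 1)) (ballMax S n) with h | h
  · show ballMax S (n + 1) = ballMax S N
    rw [hsp, max_eq_left h]; exact ih
  · exact absurd (by rw [hsp, max_eq_right h.le]) (hN (n + 1) (by omega))

lemma smallMax (hB : BddAbove (S '' Set.Iic 0)) {N : ℤ}
    (hN : ∀ m, N ≤ m → S m ≠ ballMax S m) :
    ∀ m, N ≤ m → S m ≤ ballMax S N - 1 := by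
  intro m hm
  have h1 := le_ballMax hB (le_refl m)
  have h2 := hN m hm
  have h3 := flatMax hB hN m hm
  omega

lemma not_rec_ne (hS : inS0 S) (hB : BddAbove (S '' Set.Iic 0)) (hnr : ¬ Rec S) :
    TbbInv (Tbb S) ≠ S := by
  unfold Rec at hnr
  push_neg at hnr
  obtain ⟨N, hN⟩ := hnr
  intro heq
  obtain ⟨t, ht, hSt⟩ := ballMax_mem hB 0
  have hMt : ballMax S t = ballMax S 0 :=
    le_antisymm (ballMax_mono hB ht) (hSt ▸ le_ballMax hB le_rfl)
  have hIt : ballMin (Tbb S) t = ballMax S t - 2 * ballMax S 0 := by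
    apply le_antisymm
    · have hTt : Tbb S t = ballMax S t - 2 * ballMax S 0 := by
        show 2 * ballMax S t - S t - 2 * ballMax S 0 = _
        omega
      calc ballMin (Tbb S) t ≤ Tbb S t := csInf_le (bddBelow_Tbb hB t) ⟨t, Set.self_mem_Ici, rfl⟩
        _ = _ := hTt
    · exact le_csInf (neIci _ t) (by rintro y ⟨m, hm, rfl⟩; exact Tbb_lb hB hm)
  have key : ∀ n : ℤ,
      2 * ballMin (Tbb S) n - 2 * ballMin (Tbb S) 0 = 2 * ballMax S n - 2 * ballMax S 0 := by
    intro n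
    have h2 : 2 * ballMin (Tbb S) n - Tbb S n - 2 * ballMin (Tbb S) 0 = S n := congrFun heq n
    have h3 : Tbb S n = 2 * ballMax S n - S n - 2 * ballMax S 0 := rfl
    omega
  have kt := key t
  have kN := key N
  have hIN : ballMax S N + 1 - 2 * ballMax S 0 ≤ ballMin (Tbb S) N := by
    apply le_csInf (neIci _ N)
    rintro y ⟨m, hm, rfl⟩
    have h1 := flatMax hB hN m hm
    have h2 := smallMax hB hN m hm
    show _ ≤ 2 * ballMax S m - S m - 2 * ballMax S 0
    omega
  omega

lemma rec_iff_limsup (hB : BddAbove (S '' Set.Iic 0)) : Rec S ↔ limsupEq S := by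
  constructor
  · intro hrec
    unfold limsupEq
    apply le_antisymm
    · rw [Filter.limsup_eq]
      exact sInf_le (Filter.Eventually.of_forall
        (fun n => le_iSup (fun n : ℤ => ((S n : ℝ) : EReal)) n))
    · apply iSup_le
      intro k
      rw [Filter.limsup_eq]
      apply le_sInf
      rintro b hb
      simp only [Set.mem_setOf_eq, Filter.eventually_atTop] at hb
      obtain ⟨N, hNb⟩ := hb
      obtain ⟨m, hm, hrm⟩ := hrec (max N k)
      have h1 : S k ≤ S m := hrm ▸ le_ballMax hB (le_trans (le_max_right N k) hm)
      calc ((S k : ℝ) : EReal) ≤ ((S m : ℝ) : EReal) := by exact_mod_cast h1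
        _ ≤ b := hNb m (le_trans (le_max_left N k) hm)
  · intro hls
    by_contra hnr
    unfold Rec at hnr
    push_neg at hnr
    obtain ⟨N, hN⟩ := hnr
    have hup : Filter.limsup (fun n : ℤ => ((S n : ℝ) : EReal)) Filter.atTop ≤
        (((ballMax S N - 1 : ℤ) : ℝ) : EReal) := by
      rw [Filter.limsup_eq]
      apply sInf_le
      simp only [Set.mem_setOf_eq, Filter.eventually_atTop]
      exact ⟨N, fun m hm => by exact_mod_cast smallMax hB hN m hm⟩
    obtain ⟨t, ht, hSt⟩ := ballMax_mem hB N
    have hsup : (((ballMax S N : ℤ) : ℝ) : EReal) ≤ ⨆ n : ℤ, ((S n : ℝ) : EReal) := by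
      rw [← hSt]
      exact le_iSup (fun n : ℤ => ((S n : ℝ) : EReal)) t
    rw [← hls] at hsup
    have hfin := hsup.trans hup
    have : ((ballMax S N : ℤ) : ℝ) ≤ ((ballMax S N - 1 : ℤ) : ℝ) := by exact_mod_cast hfin
    push_cast at this
    linarith

lemma flatMin (hB : BddBelow (S '' Set.Ici 0)) {N : ℤ}
    (hN : ∀ m, m ≤ N → S m ≠ ballMin S m) :
    ∀ m, m ≤ N → ballMin S m = ballMin S N := by
  intro m hm
  refine Int.le_induction_down (motive := fun m _ => ballMin S m = ballMin S N) rfl (fun n hn ih => ?_) m hm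
  have hsp := ballMin_pred hB n
  rcases le_or_gt (ballMin S n) (S (n - 1)) with h | h
  · show ballMin S (n - 1) = ballMin S N
    rw [hsp, min_eq_right h]; exact ih
  · exact absurd (by rw [hsp, min_eq_left h.le]) (hN (n - 1) (by omega))

lemma smallMin (hB : BddBelow (S '' Set.Ici 0)) {N : ℤ}
    (hN : ∀ m, m ≤ N → S m ≠ ballMin S m) :
    ∀ m, m ≤ N → ballMin S N + 1 ≤ S m := by
  intro m hm
  have h1 := ballMin_le hB (le_refl m)
  have h2 := hN m hm
  have h3 := flatMin hB hN m hm
  omega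

lemma recInf_iff_liminf (hB : BddBelow (S '' Set.Ici 0)) : RecInf S ↔ liminfEq S := by
  constructor
  · intro hrec
    unfold liminfEq
    apply le_antisymm
    · apply le_iInf
      intro k
      rw [Filter.liminf_eq]
      apply sSup_le
      rintro b hb
      simp only [Set.mem_setOf_eq, Filter.eventually_atBot] at hb
      obtain ⟨N, hNb⟩ := hb
      obtain ⟨m, hm, hrm⟩ := hrec (min N k)
      have h1 : S m ≤ S k := hrm ▸ ballMin_le hB (le_trans hm (min_le_right N k))
      calc b ≤ ((S m : ℝ) : EReal) := hNb m (le_trans hm (min_le_left N k))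
        _ ≤ ((S k : ℝ) : EReal) := by exact_mod_cast h1
    · rw [Filter.liminf_eq]
      exact le_sSup (Filter.Eventually.of_forall
        (fun n => iInf_le (fun n : ℤ => ((S n : ℝ) : EReal)) n))
  · intro hls
    by_contra hnr
    unfold RecInf at hnr
    push_neg at hnr
    obtain ⟨N, hN⟩ := hnr
    have hup : (((ballMin S N + 1 : ℤ) : ℝ) : EReal) ≤
        Filter.liminf (fun n : ℤ => ((S n : ℝ) : EReal)) Filter.atBot := by
      rw [Filter.liminf_eq]
      apply le_sSup
      simp only [Set.mem_setOf_eq, Filter.eventually_atBot]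
      exact ⟨N, fun m hm => by exact_mod_cast smallMin hB hN m hm⟩
    obtain ⟨t, ht, hSt⟩ := ballMin_mem hB N
    have hinf : (⨅ n : ℤ, ((S n : ℝ) : EReal)) ≤ (((ballMin S N : ℤ) : ℝ) : EReal) := by
      rw [← hSt]
      exact iInf_le (fun n : ℤ => ((S n : ℝ) : EReal)) t
    rw [← hls] at hinf
    have hfin := hup.trans hinf
    have : ((ballMin S N + 1 : ℤ) : ℝ) ≤ ((ballMin S N : ℤ) : ℝ) := by exact_mod_cast hfin
    push_cast at this
    linarith

/-! ### Reflection -/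

/-- Time-and-space reflection. -/
def reflZ (S : ℤ → ℤ) : ℤ → ℤ := fun n => -S (-n)

lemma reflZ_reflZ (S : ℤ → ℤ) : reflZ (reflZ S) = S := by
  funext n; simp [reflZ]

lemma inS0_reflZ (hS : inS0 S) : inS0 (reflZ S) := by
  constructor
  · show -S (-0) = 0
    simp [hS.1]
  · intro n
    have h := hS.2 (1 - n)
    have e : (1 : ℤ) - n - 1 = -n := by ring
    rw [e] at h
    have e2 : (reflZ S) n - (reflZ S) (n - 1) = S (1 - n) - S (-n) := by
      show -S (-n) - (-S (-(n - 1))) = _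
      rw [show -(n - 1) = 1 - n by ring]
      ring
    rw [e2, h]

lemma image_Iic_reflZ (S : ℤ → ℤ) (n : ℤ) :
    reflZ S '' Set.Iic n = (fun x : ℤ => -x) '' (S '' Set.Ici (-n)) := by
  ext y
  simp only [Set.mem_image, Set.mem_Iic, Set.mem_Ici]
  constructor
  · rintro ⟨m, hm, rfl⟩
    exact ⟨S (-m), ⟨-m, by omega, rfl⟩, rfl⟩
  · rintro ⟨x, ⟨m, hm, rfl⟩, rfl⟩
    exact ⟨-m, by omega, by simp [reflZ]⟩

lemma image_Ici_reflZ (S : ℤ → ℤ) (n : ℤ) :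
    reflZ S '' Set.Ici n = (fun x : ℤ => -x) '' (S '' Set.Iic (-n)) := by
  ext y
  simp only [Set.mem_image, Set.mem_Ici, Set.mem_Iic]
  constructor
  · rintro ⟨m, hm, rfl⟩
    exact ⟨S (-m), ⟨-m, by omega, rfl⟩, rfl⟩
  · rintro ⟨x, ⟨m, hm, rfl⟩, rfl⟩
    exact ⟨-m, by omega, by simp [reflZ]⟩

lemma bddAbove_negimg {s : Set ℤ} (h : BddBelow s) :
    BddAbove ((fun x : ℤ => -x) '' s) := by
  obtain ⟨b, hb⟩ := h
  refine ⟨-b, ?_⟩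
  rintro y ⟨x, hx, rfl⟩
  have := hb hx
  show -x ≤ -b
  omega

lemma bddBelow_negimg {s : Set ℤ} (h : BddAbove s) :
    BddBelow ((fun x : ℤ => -x) '' s) := by
  obtain ⟨b, hb⟩ := h
  refine ⟨-b, ?_⟩
  rintro y ⟨x, hx, rfl⟩
  have := hb hx
  show -b ≤ -x
  omega

lemma bddAbove_of_negimg {s : Set ℤ} (h : BddBelow ((fun x : ℤ => -x) '' s)) :
    BddAbove s := by
  obtain ⟨b, hb⟩ := h
  refine ⟨-b, ?_⟩
  intro x hx
  have := hb ⟨x, hx, rfl⟩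
  simp only at this
  omega

lemma bddAbove_reflZ_Iic (hB : BddBelow (S '' Set.Ici 0)) :
    BddAbove (reflZ S '' Set.Iic 0) := by
  rw [image_Iic_reflZ, neg_zero]
  exact bddAbove_negimg hB

lemma ballMax_reflZ (hB : BddBelow (S '' Set.Ici 0)) (n : ℤ) :
    ballMax (reflZ S) n = -ballMin S (-n) := by
  have hB' : BddAbove (reflZ S '' Set.Iic 0) := bddAbove_reflZ_Iic hB
  apply le_antisymm
  · apply ballMax_le
    intro m hm
    show -S (-m) ≤ _
    have : ballMin S (-n) ≤ S (-m) := ballMin_le hB (by omega)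
    omega
  · obtain ⟨t, ht, hSt⟩ := ballMin_mem hB (-n)
    have h1 : reflZ S (-t) = -ballMin S (-n) := by
      show -S (-(-t)) = _
      rw [neg_neg, hSt]
    rw [← h1]
    exact le_ballMax hB' (by omega)

lemma ballMin_reflZ (hB : BddAbove (S '' Set.Iic 0)) (n : ℤ) :
    ballMin (reflZ S) n = -ballMax S (-n) := by
  apply le_antisymm
  · obtain ⟨t, ht, hSt⟩ := ballMax_mem hB (-n)
    have h1 : reflZ S (-t) = -ballMax S (-n) := by
      show -S (-(-t)) = _
      rw [neg_neg, hSt]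
    rw [← h1]
    have hBr : BddBelow (reflZ S '' Set.Ici n) := by
      rw [image_Ici_reflZ]
      exact bddBelow_negimg (bddAbove_all hB (-n))
    refine csInf_le hBr ⟨-t, ?_, rfl⟩
    simp only [Set.mem_Ici]
    omega
  · apply le_ballMin
    intro m hm
    show _ ≤ -S (-m)
    have : S (-m) ≤ ballMax S (-n) := le_ballMax hB (by omega)
    omega

lemma Tbb_reflZ (hB : BddBelow (S '' Set.Ici 0)) :
    Tbb (reflZ S) = reflZ (TbbInv S) := by
  funext n
  show 2 * ballMax (reflZ S) n - reflZ S n - 2 * ballMax (reflZ S) 0 =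
    -(2 * ballMin S (-n) - S (-n) - 2 * ballMin S 0)
  rw [ballMax_reflZ hB n, ballMax_reflZ hB 0, neg_zero]
  show 2 * (-ballMin S (-n)) - (-S (-n)) - 2 * (-ballMin S 0) = _
  ring

lemma TbbInv_reflZ (hB : BddAbove (S '' Set.Iic 0)) :
    TbbInv (reflZ S) = reflZ (Tbb S) := by
  funext n
  show 2 * ballMin (reflZ S) n - reflZ S n - 2 * ballMin (reflZ S) 0 =
    -(2 * ballMax S (-n) - S (-n) - 2 * ballMax S 0)
  rw [ballMin_reflZ hB n, ballMin_reflZ hB 0, neg_zero]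
  show 2 * (-ballMax S (-n)) - (-S (-n)) - 2 * (-ballMax S 0) = _
  ring

lemma rec_reflZ (hB : BddBelow (S '' Set.Ici 0)) : Rec (reflZ S) ↔ RecInf S := by
  constructor
  · intro h N
    obtain ⟨m, hm, he⟩ := h (-N)
    refine ⟨-m, by omega, ?_⟩
    have h2 : -S (-m) = -ballMin S (-m) := by
      rw [← ballMax_reflZ hB m]; exact he
    omega
  · intro h N
    obtain ⟨m, hm, he⟩ := h (-N)
    refine ⟨-m, by omega, ?_⟩
    show -S (-(-m)) = _
    rw [ballMax_reflZ hB, neg_neg, he]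

lemma partA (S : ℤ → ℤ) (hS : inS0 S) (hB : BddAbove (S '' Set.Iic 0)) :
    (inS0 (Tbb S) ∧ BddBelow (Tbb S '' Set.Ici 0)) ∧
      (TbbInv (Tbb S) = S ↔ limsupEq S) := by
  refine ⟨⟨inS0_Tbb hS hB, bddBelow_Tbb hB 0⟩, ?_, ?_⟩
  · intro heq
    rw [← rec_iff_limsup hB]
    by_contra hnr
    exact not_rec_ne hS hB hnr heq
  · intro hls
    exact TbbInv_Tbb hS hB ((rec_iff_limsup hB).mpr hls)

lemma partB (S : ℤ → ℤ) (hS : inS0 S) (hB : BddBelow (S '' Set.Ici 0)) :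
    (inS0 (TbbInv S) ∧ BddAbove (TbbInv S '' Set.Iic 0)) ∧
      (Tbb (TbbInv S) = S ↔ liminfEq S) := by
  have hS' : inS0 (reflZ S) := inS0_reflZ hS
  have hB' : BddAbove (reflZ S '' Set.Iic 0) := bddAbove_reflZ_Iic hB
  have hA := partA (reflZ S) hS' hB'
  have hT : Tbb (reflZ S) = reflZ (TbbInv S) := Tbb_reflZ hB
  have hin : inS0 (TbbInv S) := by
    have h1 : inS0 (reflZ (TbbInv S)) := hT ▸ hA.1.1
    have h2 := inS0_reflZ h1
    rwa [reflZ_reflZ] at h2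
  have hba : BddAbove (TbbInv S '' Set.Iic 0) := by
    have h1 : BddBelow (reflZ (TbbInv S) '' Set.Ici 0) := hT ▸ hA.1.2
    rw [image_Ici_reflZ, neg_zero] at h1
    exact bddAbove_of_negimg h1
  refine ⟨⟨hin, hba⟩, ?_⟩
  have h1 : Tbb (TbbInv S) = S ↔ TbbInv (Tbb (reflZ S)) = reflZ S := by
    rw [hT, TbbInv_reflZ hba]
    constructor
    · intro h; rw [h]
    · intro h
      have := congrArg reflZ h
      rwa [reflZ_reflZ, reflZ_reflZ] at this
  rw [h1, hA.2]
  rw [← rec_iff_limsup hB', rec_reflZ hB, recInf_iff_liminf hB]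

end Stmt6Aux

/-- For `S ∈ 𝒮^T`, `TS ∈ 𝒮^{T⁻¹}` and `T⁻¹(TS) = S` iff
`limsup_{n→+∞} S n = sup_n S n`; dually for `S ∈ 𝒮^{T⁻¹}`.  Consequently the reversible set
`𝒮^{rev}` is as described. -/
theorem stmt_6 :
    (∀ S : ℤ → ℤ, inS0 S → BddAbove (S '' Set.Iic 0) →
      (inS0 (Tbb S) ∧ BddBelow (Tbb S '' Set.Ici 0)) ∧
      (TbbInv (Tbb S) = S ↔ limsupEq S)) ∧
    (∀ S : ℤ → ℤ, inS0 S → BddBelow (S '' Set.Ici 0) →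
      (inS0 (TbbInv S) ∧ BddAbove (TbbInv S '' Set.Iic 0)) ∧
      (Tbb (TbbInv S) = S ↔ liminfEq S)) ∧
    ({S : ℤ → ℤ | inS0 S ∧ BddAbove (S '' Set.Iic 0) ∧ BddBelow (S '' Set.Ici 0) ∧
        TbbInv (Tbb S) = S ∧ Tbb (TbbInv S) = S} =
      {S : ℤ → ℤ | inS0 S ∧ BddAbove (S '' Set.Iic 0) ∧ BddBelow (S '' Set.Ici 0) ∧
        limsupEq S ∧ liminfEq S}) := by
  refine ⟨Stmt6Aux.partA, Stmt6Aux.partB, ?_⟩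
  ext S
  simp only [Set.mem_setOf_eq]
  constructor
  · rintro ⟨h0, hA, hB, h1, h2⟩
    exact ⟨h0, hA, hB, (Stmt6Aux.partA S h0 hA).2.mp h1, (Stmt6Aux.partB S h0 hB).2.mp h2⟩
  · rintro ⟨h0, hA, hB, h1, h2⟩
    exact ⟨h0, hA, hB, (Stmt6Aux.partA S h0 hA).2.mpr h1, (Stmt6Aux.partB S h0 hB).2.mpr h2⟩
end

section
/- Let S ∈ 𝒮^{inv} satisfy lim_{n→+∞} S n = +∞. Then the set {S n : n ≤ 0} is bounded above (so M 0 is finite), I n = inf_{m ≥ n} S m tends to +∞, and lim_{n→+∞} M n / I n = 1 (limit of real ratios, where M n = sup_{m ≤ n} S m). -/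
/-- The `k`-th iterate `T^k`, using `T` for `k ≥ 0` and `T⁻¹` for `k < 0`. -/
noncomputable def Titer (k : ℤ) (S : ℤ → ℤ) : ℤ → ℤ :=
  if 0 ≤ k then Tbb^[k.toNat] S else TbbInv^[(-k).toNat] S

/-- `S ∈ 𝒮^{rev}`: the reversible set. -/
def inSrev (S : ℤ → ℤ) : Prop :=
  inS0 S ∧ BddAbove (S '' Set.Iic 0) ∧ BddBelow (S '' Set.Ici 0) ∧
    Filter.limsup (fun n : ℤ => ((S n : ℝ) : EReal)) Filter.atTop
      = ⨆ n : ℤ, ((S n : ℝ) : EReal) ∧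
    Filter.liminf (fun n : ℤ => ((S n : ℝ) : EReal)) Filter.atBot
      = ⨅ n : ℤ, ((S n : ℝ) : EReal)

/-- `S ∈ 𝒮^{inv}`: all iterates of the dynamics lie in the reversible set. -/
def inSinv (S : ℤ → ℤ) : Prop := ∀ k : ℤ, inSrev (Titer k S)

open Filter

lemma iic_nonempty (S : ℤ → ℤ) (n : ℤ) : (S '' Set.Iic n).Nonempty :=
  ⟨S n, n, Set.mem_Iic.2 le_rfl, rfl⟩

lemma ici_nonempty (S : ℤ → ℤ) (n : ℤ) : (S '' Set.Ici n).Nonempty :=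
  ⟨S n, n, Set.mem_Ici.2 le_rfl, rfl⟩

lemma bddBelow_ici (S : ℤ → ℤ) (h0 : BddBelow (S '' Set.Ici 0)) {n : ℤ} (hn : 0 ≤ n) :
    BddBelow (S '' Set.Ici n) :=
  h0.mono (Set.image_mono (Set.Ici_subset_Ici.mpr hn))

lemma ballMin_le (S : ℤ → ℤ) (h0 : BddBelow (S '' Set.Ici 0)) {n m : ℤ}
    (hn : 0 ≤ n) (hm : n ≤ m) : ballMin S n ≤ S m :=
  csInf_le (bddBelow_ici S h0 hn) ⟨m, Set.mem_Ici.2 hm, rfl⟩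

lemma ballMin_mono (S : ℤ → ℤ) (h0 : BddBelow (S '' Set.Ici 0)) {n m : ℤ}
    (hn : 0 ≤ n) (hm : n ≤ m) : ballMin S n ≤ ballMin S m :=
  csInf_le_csInf (bddBelow_ici S h0 hn) (ici_nonempty S m)
    (Set.image_mono (Set.Ici_subset_Ici.mpr hm))

lemma le_ballMin (S : ℤ → ℤ) {n B : ℤ} (h : ∀ m, n ≤ m → B ≤ S m) : B ≤ ballMin S n :=
  le_csInf (ici_nonempty S n) (by rintro x ⟨m, hm, rfl⟩; exact h m hm)

lemma ballMin_tendsto (S : ℤ → ℤ) (hdiv : Tendsto S atTop atTop) :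
    Tendsto (fun n => ballMin S n) atTop atTop := by
  rw [tendsto_atTop]
  intro b
  obtain ⟨N, hN⟩ := (tendsto_atTop.mp hdiv b).exists_forall_of_atTop
  filter_upwards [eventually_ge_atTop N] with n hn
  exact le_ballMin S fun m hm => hN m (le_trans hn hm)



def Bnd (S : ℤ → ℤ) (a b : ℤ) : Prop := ∃ C, ∀ m, 0 ≤ m → a * S m ≤ b * ballMin S m + C

lemma crossing (S : ℤ → ℤ) (hS0 : S 0 = 0) (hstep : ∀ n : ℤ, |S n - S (n - 1)| = 1)
    (h0 : BddBelow (S '' Set.Ici 0)) {m : ℤ} (hm : 0 ≤ m) (hI : 0 ≤ ballMin S m) :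
    ∃ n, 0 ≤ n ∧ n ≤ m ∧ S n = ballMin S m ∧ ballMin S n = ballMin S m := by
  set A : Set ℤ := {j | j ∈ Set.Icc 0 m ∧ S j ≤ ballMin S m} with hA
  have hfin : A.Finite := (Set.finite_Icc 0 m).subset fun j hj => hj.1
  have hne : A.Nonempty := ⟨0, ⟨le_rfl, hm⟩, by rw [hS0]; exact hI⟩
  obtain ⟨n, hnA, hmax⟩ : ∃ n ∈ A, ∀ j ∈ A, id n ≤ id j → id n = id j := by
    obtain ⟨n, hn⟩ := hfin.exists_maximal hne
    exact ⟨n, hn.1, fun j hj h => le_antisymm h (hn.2 hj h)⟩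
  have hmax' : ∀ j ∈ A, j ≤ n := by
    intro j hj
    by_contra hlt
    have := hmax j hj (by simp; omega)
    simp at this; omega
  obtain ⟨⟨hn0, hnm⟩, hSn_le⟩ := hnA
  have hSn : S n = ballMin S m := by
    rcases eq_or_lt_of_le hnm with h | h
    · rw [h]; exact le_antisymm (h ▸ hSn_le) (ballMin_le S h0 hm le_rfl)
    · have h1 : ¬ S (n + 1) ≤ ballMin S m := fun hc => by
        have := hmax' (n + 1) ⟨⟨by omega, by omega⟩, hc⟩; omega
      have h2 := hstep (n + 1)
      simp only [add_sub_cancel_right] at h2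
      have h3 : S (n + 1) - S n ≤ 1 := by
        have := le_abs_self (S (n + 1) - S n); omega
      omega
  have hIn : ballMin S n = ballMin S m := by
    refine le_antisymm (hSn ▸ ballMin_le S h0 hn0 le_rfl) (le_csInf (ici_nonempty S n) ?_)
    rintro x ⟨j, hj, rfl⟩
    simp only [Set.mem_Ici] at hj
    rcases le_or_gt m j with hj2 | hj2
    · exact ballMin_le S h0 hm hj2
    · by_contra hcon
      push_neg at hcon
      have hjA : j ∈ A := ⟨⟨le_trans hn0 hj, le_of_lt hj2⟩, le_of_lt hcon⟩
      have h4 := hmax' j hjA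
      have h5 : j = n := le_antisymm h4 hj
      rw [h5, hSn] at hcon
      exact lt_irrefl _ hcon
  exact ⟨n, hn0, hnm, hSn, hIn⟩

lemma bnd_base (S : ℤ → ℤ) (h1 : BddBelow (TbbInv S '' Set.Ici 0)) : Bnd S 1 2 := by
  obtain ⟨c, hc⟩ := h1
  refine ⟨-2 * ballMin S 0 - c, fun m hm => ?_⟩
  have h := hc ⟨m, Set.mem_Ici.2 hm, rfl⟩
  simp only [TbbInv] at h
  linarith




lemma bnd_improve (S : ℤ → ℤ) (hrev : ∀ j : ℕ, inSrev (TbbInv^[j] S)) {a b : ℤ}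
    (ha : 1 ≤ a) (hab : a ≤ b) (h : Bnd (TbbInv S) a b) : Bnd S b (2 * b - a) := by
  have hrev0 := hrev 0
  simp only [Function.iterate_zero_apply] at hrev0
  have hrev1 := hrev 1
  simp only [Function.iterate_one] at hrev1
  obtain ⟨⟨hS0, hstep⟩, -, h0, -⟩ := hrev0
  obtain ⟨-, -, h1, -⟩ := hrev1
  obtain ⟨C0, hC0⟩ := bnd_base S h1
  obtain ⟨C, hC⟩ := h
  refine ⟨max (b * C0) ((2 * a - 2 * b) * ballMin S 0 + C), fun m hm => ?_⟩
  rcases le_or_gt 0 (ballMin S m) with hIm | hIm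
  · obtain ⟨n, hn0, hnm, hSn, hIn⟩ := crossing S hS0 hstep h0 hm hIm
    have key1 := hC n hn0
    have key2 : ballMin (TbbInv S) n ≤ TbbInv S m := ballMin_le _ h1 hn0 hnm
    have key2' : b * ballMin (TbbInv S) n ≤ b * TbbInv S m :=
      mul_le_mul_of_nonneg_left key2 (by omega)
    simp only [TbbInv] at key1 key2'
    rw [hSn, hIn] at key1
    have hmax := le_max_right (b * C0) ((2 * a - 2 * b) * ballMin S 0 + C)
    nlinarith [key1, key2']
  · have h2 := hC0 m hm
    have h2' : b * (1 * S m) ≤ b * (2 * ballMin S m + C0) :=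
      mul_le_mul_of_nonneg_left h2 (by omega)
    have h3 : a * ballMin S m ≤ 0 := by nlinarith
    have hmax := le_max_left (b * C0) ((2 * a - 2 * b) * ballMin S 0 + C)
    nlinarith

lemma bnd_all : ∀ (k : ℕ) (S : ℤ → ℤ), (∀ j : ℕ, inSrev (TbbInv^[j] S)) →
    Bnd S ((k : ℤ) + 1) ((k : ℤ) + 2) := by
  intro k
  induction k with
  | zero =>
    intro S hrev
    have h1 := hrev 1
    simp only [Function.iterate_one] at h1
    obtain ⟨C, hC⟩ := bnd_base S h1.2.2.1
    exact ⟨C, fun m hm => by have := hC m hm; push_cast; linarith⟩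
  | succ k ih =>
    intro S hrev
    have hrev' : ∀ j : ℕ, inSrev (TbbInv^[j] (TbbInv S)) := fun j => by
      rw [← Function.iterate_succ_apply]; exact hrev (j + 1)
    have hb := bnd_improve S hrev (by omega) (by omega) (ih (TbbInv S) hrev')
    obtain ⟨C, hC⟩ := hb
    exact ⟨C, fun m hm => by have := hC m hm; push_cast; push_cast at this; linarith⟩




lemma max_bnd (S : ℤ → ℤ) (hrev : ∀ j : ℕ, inSrev (TbbInv^[j] S))
    (hBA : BddAbove (S '' Set.Iic 0)) (hBAn : ∀ n : ℤ, BddAbove (S '' Set.Iic n)) (k : ℕ) :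
    ∃ C, ∀ n, 0 ≤ n → ((k : ℤ) + 1) * ballMax S n ≤ ((k : ℤ) + 2) * ballMin S n + C := by
  obtain ⟨C, hC⟩ := bnd_all k S hrev
  have h0 : BddBelow (S '' Set.Ici 0) := by
    have := hrev 0
    simp only [Function.iterate_zero_apply] at this
    exact this.2.2.1
  set C' : ℤ := max C (((k : ℤ) + 1) * ballMax S 0 - ((k : ℤ) + 2) * ballMin S 0) with hC'
  refine ⟨C', fun n hn => ?_⟩
  have hkpos : (0 : ℤ) < (k : ℤ) + 1 := by positivity
  have hper : ∀ j : ℤ, j ≤ n → ((k : ℤ) + 1) * S j ≤ ((k : ℤ) + 2) * ballMin S n + C' := by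
    intro j hj
    rcases le_or_gt j 0 with hj0 | hj0
    · have h1 : S j ≤ ballMax S 0 := le_csSup hBA ⟨j, hj0, rfl⟩
      have h2 : ballMin S 0 ≤ ballMin S n := ballMin_mono S h0 le_rfl hn
      have h3 : ((k : ℤ) + 1) * S j ≤ ((k : ℤ) + 1) * ballMax S 0 :=
        mul_le_mul_of_nonneg_left h1 (by omega)
      have h4 := le_max_right C (((k : ℤ) + 1) * ballMax S 0 - ((k : ℤ) + 2) * ballMin S 0)
      nlinarith
    · have h1 := hC j (le_of_lt hj0)
      have h2 : ballMin S j ≤ ballMin S n := ballMin_mono S h0 (le_of_lt hj0) hj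
      have h4 := le_max_left C (((k : ℤ) + 1) * ballMax S 0 - ((k : ℤ) + 2) * ballMin S 0)
      nlinarith
  set B : ℤ := (((k : ℤ) + 2) * ballMin S n + C') / ((k : ℤ) + 1) with hB
  have hM : ballMax S n ≤ B := by
    apply csSup_le (iic_nonempty S n)
    rintro x ⟨j, hj, rfl⟩
    rw [Int.le_ediv_iff_mul_le hkpos]
    have := hper j hj
    linarith
  have hdm := Int.mul_ediv_add_emod (((k : ℤ) + 2) * ballMin S n + C') ((k : ℤ) + 1)
  have hmod := Int.emod_nonneg (((k : ℤ) + 2) * ballMin S n + C') (show ((k : ℤ) + 1) ≠ 0 by omega)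
  have h5 : ((k : ℤ) + 1) * ballMax S n ≤ ((k : ℤ) + 1) * B :=
    mul_le_mul_of_nonneg_left hM (by omega)
  linarith

/-- If `S ∈ 𝒮^{inv}` and `S n → +∞` as `n → +∞`, then `{S n : n ≤ 0}` is
bounded above, the future minimum `I n` tends to `+∞`, and `M n / I n → 1` as `n → +∞`. -/
theorem stmt_9 (S : ℤ → ℤ) (hS : inSinv S)
    (hdiv : Filter.Tendsto S Filter.atTop Filter.atTop) :
    BddAbove (S '' Set.Iic 0) ∧
    Filter.Tendsto (fun n : ℤ => ballMin S n) Filter.atTop Filter.atTop ∧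
    Filter.Tendsto (fun n : ℤ => (ballMax S n : ℝ) / (ballMin S n : ℝ))
      Filter.atTop (nhds 1) := by
  have hrev : ∀ j : ℕ, inSrev (TbbInv^[j] S) := by
    intro j
    cases j with
    | zero => simpa [Titer] using hS 0
    | succ i =>
      have h := hS (-((i : ℤ) + 1))
      rw [Titer, if_neg (by omega)] at h
      have ht : ((-(-((i : ℤ) + 1))).toNat) = i + 1 := by omega
      rwa [ht] at h
  have hrev0 : inSrev S := by
    have := hrev 0
    simpa only [Function.iterate_zero_apply] using this
  obtain ⟨⟨hS0, hstep⟩, hBA, h0, -⟩ := hrev0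
  have hImin : Tendsto (fun n : ℤ => ballMin S n) atTop atTop := ballMin_tendsto S hdiv
  refine ⟨hBA, hImin, ?_⟩
  have hBAn : ∀ n : ℤ, BddAbove (S '' Set.Iic n) := by
    intro n
    have hsub : S '' Set.Iic n ⊆ S '' Set.Iic 0 ∪ S '' Set.Icc 0 n := by
      rintro x ⟨j, hj, rfl⟩
      rcases le_or_gt j 0 with h | h
      · exact Or.inl ⟨j, h, rfl⟩
      · exact Or.inr ⟨j, ⟨le_of_lt h, hj⟩, rfl⟩
    exact BddAbove.mono hsub (hBA.union ((Set.finite_Icc 0 n).image S).bddAbove)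
  rw [Metric.tendsto_nhds]
  intro ε hε
  obtain ⟨k, hk⟩ := exists_nat_gt (2 / ε)
  obtain ⟨C, hC⟩ := max_bnd S hrev hBA hBAn k
  obtain ⟨N, hN⟩ := exists_nat_gt ((2 * |(C : ℝ)| + 2) / (ε * ((k : ℝ) + 1)))
  filter_upwards [hImin.eventually_ge_atTop ((N : ℤ) + 1), eventually_ge_atTop (0 : ℤ)]
    with n hn hn0
  have hIM : ballMin S n ≤ ballMax S n := by
    have h1 : ballMin S n ≤ S n := ballMin_le S h0 hn0 le_rfl
    have h2 : S n ≤ ballMax S n := le_csSup (hBAn n) ⟨n, Set.mem_Iic.2 le_rfl, rfl⟩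
    omega
  have hMb := hC n hn0
  have e3 : (N : ℝ) + 1 ≤ ((ballMin S n : ℤ) : ℝ) := by exact_mod_cast hn
  have hMbR' : ((k : ℝ) + 1) * ((ballMax S n : ℤ) : ℝ) ≤ ((k : ℝ) + 2) * ((ballMin S n : ℤ) : ℝ) + (C : ℝ) := by exact_mod_cast hMb
  have hIMR : ((ballMin S n : ℤ) : ℝ) ≤ ((ballMax S n : ℤ) : ℝ) := by exact_mod_cast hIM
  set I : ℝ := ((ballMin S n : ℤ) : ℝ) with hI
  set M : ℝ := ((ballMax S n : ℤ) : ℝ) with hM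
  have e4 : (0 : ℝ) < I := by
    have : (0 : ℝ) ≤ (N : ℝ) := Nat.cast_nonneg N
    linarith
  have hkR : (0 : ℝ) < (k : ℝ) + 1 := by positivity
  have e1 : 2 < ε * ((k : ℝ) + 1) := by
    have h := (div_lt_iff₀ hε).mp hk
    nlinarith
  have e2 : 2 * |(C : ℝ)| + 2 < (N : ℝ) * (ε * ((k : ℝ) + 1)) :=
    (div_lt_iff₀ (by positivity)).mp hN
  have hint1 : 0 ≤ (ε * ((k : ℝ) + 1) - 1) * (I - ((N : ℝ) + 1)) :=
    mul_nonneg (by linarith) (by linarith)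
  have hint2 : 0 ≤ (N : ℝ) * (ε * ((k : ℝ) + 1) - 2) :=
    mul_nonneg (Nat.cast_nonneg N) (by linarith)
  have key : (C : ℝ) < (ε * ((k : ℝ) + 1) - 1) * I := by
    have hca := le_abs_self (C : ℝ)
    nlinarith
  have hMbR : ((k : ℝ) + 1) * M ≤ ((k : ℝ) + 2) * I + C := hMbR'
  have final : M < (1 + ε) * I := by nlinarith
  have h1le : 1 ≤ M / I := (one_le_div e4).mpr hIMR
  rw [Real.dist_eq, abs_of_nonneg (by linarith)]
  rw [sub_lt_iff_lt_add, div_lt_iff₀ e4]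
  nlinarith
end

section
/- Let η and η′ be particle configurations whose path encodings S and S′ both lie in 𝒮^{inv}, and for k ∈ ℤ set w^k = sup_{m ≤ 0} (T^k S) m and w′^k = sup_{m ≤ 0} (T^k S′) m (the carrier values at the origin of the k-th iterates). Suppose w^k = w′^k for every k ∈ ℤ, and suppose the sequence (w^k)_{k∈ℤ} has infinitely many odd gaps between zeros in both directions. Then η = η′. -/
/-- An odd gap between consecutive zeros of `w` at `k < k'`. -/
def OddGap (w : ℤ → ℤ) (k k' : ℤ) : Prop :=
  k < k' ∧ w k = 0 ∧ w k' = 0 ∧ (∀ j : ℤ, k < j → j < k' → 0 < w j) ∧ Odd (k' - k)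

/-- `w` has infinitely many odd gaps between zeros in both directions. -/
def OddGapsBothDir (w : ℤ → ℤ) : Prop :=
  (∀ N : ℤ, ∃ k k' : ℤ, N ≤ k ∧ OddGap w k k') ∧
  (∀ N : ℤ, ∃ k k' : ℤ, k' ≤ N ∧ OddGap w k k')

namespace BBS

lemma bddAbove_all {X : ℤ → ℤ} (hb : BddAbove (X '' Set.Iic 0)) (n : ℤ) :
    BddAbove (X '' Set.Iic n) := by
  have hsub : X '' Set.Iic n ⊆ (X '' Set.Iic 0) ∪ (X '' Set.Icc 1 n) := by
    rintro y ⟨m, hm, rfl⟩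
    rcases le_or_gt m 0 with h | h
    · exact Or.inl ⟨m, h, rfl⟩
    · exact Or.inr ⟨m, ⟨h, hm⟩, rfl⟩
  exact BddAbove.mono hsub (hb.union ((Set.finite_Icc 1 n).image X).bddAbove)

lemma bddBelow_all {X : ℤ → ℤ} (hb : BddBelow (X '' Set.Ici 0)) (n : ℤ) :
    BddBelow (X '' Set.Ici n) := by
  have hsub : X '' Set.Ici n ⊆ (X '' Set.Ici 0) ∪ (X '' Set.Icc n (-1)) := by
    rintro y ⟨m, hm, rfl⟩
    rcases le_or_gt 0 m with h | h
    · exact Or.inl ⟨m, h, rfl⟩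
    · exact Or.inr ⟨m, ⟨hm, by omega⟩, rfl⟩
  exact BddBelow.mono hsub (hb.union ((Set.finite_Icc n (-1)).image X).bddBelow)

lemma le_ballMax {X : ℤ → ℤ} (hb : BddAbove (X '' Set.Iic 0)) {m n : ℤ} (h : m ≤ n) :
    X m ≤ ballMax X n :=
  le_csSup (bddAbove_all hb n) ⟨m, h, rfl⟩

lemma ballMin_le {X : ℤ → ℤ} (hb : BddBelow (X '' Set.Ici 0)) {m n : ℤ} (h : n ≤ m) :
    ballMin X n ≤ X m :=
  csInf_le (bddBelow_all hb n) ⟨m, h, rfl⟩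

lemma ballMax_mono {X : ℤ → ℤ} (hb : BddAbove (X '' Set.Iic 0)) {m n : ℤ} (h : m ≤ n) :
    ballMax X m ≤ ballMax X n :=
  csSup_le_csSup (bddAbove_all hb n) (⟨X m, m, le_refl m, rfl⟩)
    (Set.image_mono (f := X) (Set.Iic_subset_Iic.mpr h))

lemma ballMin_mono {X : ℤ → ℤ} (hb : BddBelow (X '' Set.Ici 0)) {m n : ℤ} (h : m ≤ n) :
    ballMin X m ≤ ballMin X n :=
  csInf_le_csInf (bddBelow_all hb m) (⟨X n, n, le_refl n, rfl⟩)
    (Set.image_mono (f := X) (Set.Ici_subset_Ici.mpr h))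

lemma ballMax_mem {X : ℤ → ℤ} (hb : BddAbove (X '' Set.Iic 0)) (n : ℤ) :
    ballMax X n ∈ X '' Set.Iic n :=
  Int.csSup_mem ⟨X n, n, le_refl n, rfl⟩ (bddAbove_all hb n)

lemma ballMin_mem {X : ℤ → ℤ} (hb : BddBelow (X '' Set.Ici 0)) (n : ℤ) :
    ballMin X n ∈ X '' Set.Ici n :=
  Int.csInf_mem ⟨X n, n, le_refl n, rfl⟩ (bddBelow_all hb n)

lemma ballMax_succ {X : ℤ → ℤ} (hb : BddAbove (X '' Set.Iic 0)) (n : ℤ) :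
    ballMax X (n + 1) = max (ballMax X n) (X (n + 1)) := by
  have h1 : Set.Iic (n + 1) = insert (n + 1) (Set.Iic n) := by
    ext m; simp; omega
  have : ballMax X (n+1) = sSup (insert (X (n+1)) (X '' Set.Iic n)) := by
    rw [ballMax, h1, Set.image_insert_eq]
  rw [this, csSup_insert (bddAbove_all hb n) ⟨X n, n, le_refl n, rfl⟩]
  rw [ballMax, max_comm]

lemma ballMax_le {X : ℤ → ℤ} {n B : ℤ} (h : ∀ m : ℤ, m ≤ n → X m ≤ B) :
    ballMax X n ≤ B := by
  apply csSup_le (⟨X n, n, le_refl n, rfl⟩ : (X '' Set.Iic n).Nonempty)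
  rintro y ⟨m, hm, rfl⟩; exact h m hm

lemma le_ballMin {X : ℤ → ℤ} {n B : ℤ} (h : ∀ m : ℤ, n ≤ m → B ≤ X m) :
    B ≤ ballMin X n := by
  apply le_csInf (⟨X n, n, le_refl n, rfl⟩ : (X '' Set.Ici n).Nonempty)
  rintro y ⟨m, hm, rfl⟩; exact h m hm

end BBS

namespace BBS

lemma pm {d : ℤ} (h : |d| = 1) : d = 1 ∨ d = -1 := by
  rcases abs_cases d with ⟨h1, _⟩ | ⟨h1, _⟩ <;> omega

/-- From the limsup condition: the path exceeds its past maximum in the future. -/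
lemma exists_ge_max {X : ℤ → ℤ}
    (hb : BddAbove (X '' Set.Iic 0))
    (hls : Filter.limsup (fun n : ℤ => ((X n : ℝ) : EReal)) Filter.atTop
      = ⨆ n : ℤ, ((X n : ℝ) : EReal)) (n : ℤ) :
    ∃ m : ℤ, n ≤ m ∧ ballMax X n ≤ X m := by
  by_contra hc
  push_neg at hc
  set B := ballMax X n with hB
  have hev : ∀ᶠ m in (Filter.atTop : Filter ℤ),
      (fun m : ℤ => ((X m : ℝ) : EReal)) m ≤ ((((B : ℝ) - 1 : ℝ)) : EReal) := by
    rw [Filter.eventually_atTop]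
    refine ⟨n, fun m hm => ?_⟩
    have h1 : X m ≤ B - 1 := by have := hc m hm; omega
    have h2 : (X m : ℝ) ≤ (B : ℝ) - 1 := by exact_mod_cast h1
    show ((X m : ℝ) : EReal) ≤ _
    exact EReal.coe_le_coe_iff.mpr h2
  have h1 : Filter.limsup (fun n : ℤ => ((X n : ℝ) : EReal)) Filter.atTop
      ≤ ((((B : ℝ) - 1 : ℝ)) : EReal) := Filter.limsup_le_of_le (by isBoundedDefault) hev
  obtain ⟨m0, _, hm0⟩ := ballMax_mem hb n
  have h2 : ((B : ℝ) : EReal) ≤ ⨆ n : ℤ, ((X n : ℝ) : EReal) := by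
    have : ((B : ℝ) : EReal) = ((X m0 : ℝ) : EReal) := by rw [hm0]
    rw [this]
    exact le_iSup (fun n : ℤ => ((X n : ℝ) : EReal)) m0
  rw [← hls] at h2
  have h3 := le_trans h2 h1
  have h4 : (B : ℝ) ≤ (B : ℝ) - 1 := EReal.coe_le_coe_iff.mp h3
  linarith

/-- From the liminf condition: the path goes below its future minimum in the past. -/
lemma exists_le_min {X : ℤ → ℤ}
    (hb : BddBelow (X '' Set.Ici 0))
    (hls : Filter.liminf (fun n : ℤ => ((X n : ℝ) : EReal)) Filter.atBot
      = ⨅ n : ℤ, ((X n : ℝ) : EReal)) (n : ℤ) :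
    ∃ m : ℤ, m ≤ n ∧ X m ≤ ballMin X n := by
  by_contra hc
  push_neg at hc
  set B := ballMin X n with hB
  have hev : ∀ᶠ m in (Filter.atBot : Filter ℤ),
      ((((B : ℝ) + 1 : ℝ)) : EReal) ≤ (fun m : ℤ => ((X m : ℝ) : EReal)) m := by
    rw [Filter.eventually_atBot]
    refine ⟨n, fun m hm => ?_⟩
    have h1 : B + 1 ≤ X m := by have := hc m hm; omega
    have h2 : (B : ℝ) + 1 ≤ (X m : ℝ) := by exact_mod_cast h1
    show _ ≤ ((X m : ℝ) : EReal)
    exact EReal.coe_le_coe_iff.mpr h2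
  have h1 : ((((B : ℝ) + 1 : ℝ)) : EReal)
      ≤ Filter.liminf (fun n : ℤ => ((X n : ℝ) : EReal)) Filter.atBot :=
    Filter.le_liminf_of_le (by isBoundedDefault) hev
  obtain ⟨m0, _, hm0⟩ := ballMin_mem hb n
  have h2 : (⨅ n : ℤ, ((X n : ℝ) : EReal)) ≤ ((B : ℝ) : EReal) := by
    have : ((B : ℝ) : EReal) = ((X m0 : ℝ) : EReal) := by rw [hm0]
    rw [this]
    exact iInf_le (fun n : ℤ => ((X n : ℝ) : EReal)) m0
  rw [← hls] at h2
  have h3 := le_trans h1 h2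
  have h4 : (B : ℝ) + 1 ≤ (B : ℝ) := EReal.coe_le_coe_iff.mp h3
  linarith

/-- Discrete IVT upward: the path attains the past max in the future without new records. -/
lemma reach_max {X : ℤ → ℤ} (hstep : ∀ n : ℤ, |X n - X (n - 1)| = 1)
    (hb : BddAbove (X '' Set.Iic 0))
    (hls : Filter.limsup (fun n : ℤ => ((X n : ℝ) : EReal)) Filter.atTop
      = ⨆ n : ℤ, ((X n : ℝ) : EReal)) (n : ℤ) :
    ∃ m : ℤ, n ≤ m ∧ X m = ballMax X n ∧ ballMax X m = ballMax X n := by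
  set B := ballMax X n with hB
  obtain ⟨m1, hm1, hm1'⟩ := exists_ge_max hb hls n
  obtain ⟨m, ⟨hmn, hmB⟩, hmin⟩ :=
    Int.exists_least_of_bdd (P := fun m => n ≤ m ∧ B ≤ X m) ⟨n, fun z hz => hz.1⟩
      ⟨m1, hm1, hm1'⟩
  have hXm : X m = B := by
    rcases eq_or_lt_of_le hmn with rfl | h
    · have : X n ≤ B := le_ballMax hb (le_refl n)
      omega
    · have hm1n : n ≤ m - 1 := by omega
      have hnot : ¬ (n ≤ m - 1 ∧ B ≤ X (m - 1)) := fun hmem => by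
        have := hmin _ hmem; omega
      have hXm1 : X (m-1) ≤ B - 1 := by
        by_contra hcon
        exact hnot ⟨hm1n, by omega⟩
      rcases pm (hstep m) with h' | h' <;> omega
  refine ⟨m, hmn, hXm, le_antisymm ?_ (ballMax_mono hb hmn)⟩
  apply ballMax_le
  intro j hj
  rcases le_or_gt j n with h | h
  · exact le_ballMax hb h
  · rcases eq_or_lt_of_le hj with h' | h'
    · rw [h', hXm]
    · have hnot : ¬ (n ≤ j ∧ B ≤ X j) := fun hmem => by
        have := hmin _ hmem; omega
      by_contra hcon
      exact hnot ⟨le_of_lt h, by omega⟩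

/-- Discrete IVT downward: the path attains the future min in the past. -/
lemma reach_min {X : ℤ → ℤ} (hstep : ∀ n : ℤ, |X n - X (n - 1)| = 1)
    (hb : BddBelow (X '' Set.Ici 0))
    (hls : Filter.liminf (fun n : ℤ => ((X n : ℝ) : EReal)) Filter.atBot
      = ⨅ n : ℤ, ((X n : ℝ) : EReal)) (n : ℤ) :
    ∃ m : ℤ, m ≤ n ∧ X m = ballMin X n ∧ ballMin X m = ballMin X n := by
  set B := ballMin X n with hB
  obtain ⟨m1, hm1, hm1'⟩ := exists_le_min hb hls n
  obtain ⟨m, ⟨hmn, hmB⟩, hmax⟩ :=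
    Int.exists_greatest_of_bdd (P := fun m => m ≤ n ∧ X m ≤ B) ⟨n, fun z hz => hz.1⟩
      ⟨m1, hm1, hm1'⟩
  have hXm : X m = B := by
    rcases eq_or_lt_of_le hmn with rfl | h
    · have : B ≤ X m := ballMin_le hb (le_refl m)
      omega
    · have hnot : ¬ (m + 1 ≤ n ∧ X (m+1) ≤ B) := fun hmem => by
        have := hmax _ hmem; omega
      have h1 : m + 1 ≤ n := by omega
      have hXm1 : B + 1 ≤ X (m+1) := by
        by_contra hcon
        exact hnot ⟨h1, by omega⟩
      have habs := hstep (m+1)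
      have heq : (m+1) - 1 = m := by omega
      rw [heq] at habs
      rcases pm habs with h' | h' <;> omega
  refine ⟨m, hmn, hXm, le_antisymm (ballMin_mono hb hmn) ?_⟩
  apply le_ballMin
  intro j hj
  rcases le_or_gt n j with h | h
  · exact ballMin_le hb h
  · rcases eq_or_lt_of_le hj with h' | h'
    · rw [← h', hXm]
    · have hnot : ¬ (j ≤ n ∧ X j ≤ B) := fun hmem => by
        have := hmax _ hmem; omega
      by_contra hcon
      exact hnot ⟨le_of_lt h, by omega⟩

end BBS

namespace BBS

/-- `inSrev` data unpacked. -/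
lemma srev_step {X : ℤ → ℤ} (h : inSrev X) : ∀ n : ℤ, |X n - X (n - 1)| = 1 := h.1.2
lemma srev_zero {X : ℤ → ℤ} (h : inSrev X) : X 0 = 0 := h.1.1
lemma srev_bddA {X : ℤ → ℤ} (h : inSrev X) : BddAbove (X '' Set.Iic 0) := h.2.1
lemma srev_bddB {X : ℤ → ℤ} (h : inSrev X) : BddBelow (X '' Set.Ici 0) := h.2.2.1

/-- The future min of `Tbb X`. -/
lemma ballMin_Tbb {X : ℤ → ℤ} (h : inSrev X) (n : ℤ) :
    ballMin (Tbb X) n = ballMax X n - 2 * ballMax X 0 := by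
  have hb := srev_bddA h
  apply le_antisymm
  · obtain ⟨m, hmn, hXm, hMm⟩ := reach_max (srev_step h) hb h.2.2.2.1 n
    have : Tbb X m = ballMax X n - 2 * ballMax X 0 := by
      simp only [Tbb]; rw [hMm, hXm]; ring
    rw [← this]
    have hbdd : BddBelow (Tbb X '' Set.Ici n) := by
      refine ⟨ballMax X n - 2 * ballMax X 0, ?_⟩
      rintro y ⟨j, hj, rfl⟩
      simp only [Tbb]
      have h1 : ballMax X n ≤ ballMax X j := ballMax_mono hb hj
      have h2 : X j ≤ ballMax X j := le_ballMax hb (le_refl j)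
      omega
    exact csInf_le hbdd ⟨m, hmn, rfl⟩
  · apply le_ballMin
    intro m hm
    simp only [Tbb]
    have h1 : ballMax X n ≤ ballMax X m := ballMax_mono hb hm
    have h2 : X m ≤ ballMax X m := le_ballMax hb (le_refl m)
    omega

/-- The past max of `TbbInv X`. -/
lemma ballMax_TbbInv {X : ℤ → ℤ} (h : inSrev X) (n : ℤ) :
    ballMax (TbbInv X) n = ballMin X n - 2 * ballMin X 0 := by
  have hb := srev_bddB h
  apply le_antisymm
  · apply ballMax_le
    intro m hm
    simp only [TbbInv]
    have h1 : ballMin X m ≤ ballMin X n := ballMin_mono hb hm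
    have h2 : ballMin X m ≤ X m := ballMin_le hb (le_refl m)
    omega
  · obtain ⟨m, hmn, hXm, hMm⟩ := reach_min (srev_step h) hb h.2.2.2.2 n
    have : TbbInv X m = ballMin X n - 2 * ballMin X 0 := by
      simp only [TbbInv]; rw [hMm, hXm]; ring
    rw [← this]
    have hbdd : BddAbove (TbbInv X '' Set.Iic n) := by
      refine ⟨ballMin X n - 2 * ballMin X 0, ?_⟩
      rintro y ⟨j, hj, rfl⟩
      simp only [TbbInv]
      have h1 : ballMin X j ≤ ballMin X n := ballMin_mono hb hj
      have h2 : ballMin X j ≤ X j := ballMin_le hb (le_refl j)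
      omega
    exact le_csSup hbdd ⟨m, hmn, rfl⟩

lemma TbbInv_Tbb {X : ℤ → ℤ} (h : inSrev X) : TbbInv (Tbb X) = X := by
  funext n
  simp only [TbbInv, Tbb, ballMin_Tbb h]
  ring

lemma Tbb_TbbInv {X : ℤ → ℤ} (h : inSrev X) : Tbb (TbbInv X) = X := by
  funext n
  simp only [Tbb, TbbInv, ballMax_TbbInv h]
  ring

lemma Titer_zero (S : ℤ → ℤ) : Titer 0 S = S := by
  simp [Titer]

lemma Titer_succ {S : ℤ → ℤ} (hS : inSinv S) (k : ℤ) :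
    Titer (k + 1) S = Tbb (Titer k S) := by
  rcases le_or_gt 0 k with hk | hk
  · have h1 : (0:ℤ) ≤ k + 1 := by omega
    simp only [Titer, if_pos hk, if_pos h1]
    have : (k+1).toNat = k.toNat + 1 := by omega
    rw [this, Function.iterate_succ_apply']
  · have h2 : ¬ (0:ℤ) ≤ k := by omega
    have hrev : inSrev (Titer (k+1) S) := hS (k+1)
    rcases eq_or_lt_of_le (by omega : k + 1 ≤ 0) with h0 | h0
    · -- k = -1
      have hk1 : k = -1 := by omega
      subst hk1
      have h0' : (-1 : ℤ) + 1 = 0 := by norm_num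
      rw [h0', Titer_zero]
      have hrevS : inSrev S := by
        have := hS 0
        rwa [Titer_zero] at this
      have hT : Titer (-1 : ℤ) S = TbbInv S := by
        simp only [Titer]
        rw [if_neg (by norm_num : ¬ (0:ℤ) ≤ -1)]
        norm_num
      rw [hT, Tbb_TbbInv hrevS]
    · have h3 : ¬ (0:ℤ) ≤ k + 1 := by omega
      simp only [Titer, if_neg h2, if_neg h3] at hrev ⊢
      have hnat : (-k).toNat = (-(k+1)).toNat + 1 := by omega
      rw [hnat, Function.iterate_succ_apply']
      rw [Tbb_TbbInv hrev]

lemma Titer_pred {S : ℤ → ℤ} (hS : inSinv S) (k : ℤ) :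
    Titer (k - 1) S = TbbInv (Titer k S) := by
  have h := Titer_succ hS (k - 1)
  have h2 : k - 1 + 1 = k := by ring
  rw [h2] at h
  rw [h, TbbInv_Tbb (hS (k-1))]

end BBS

namespace BBS

/-- A "good family": trajectory of paths under the dynamics. -/
def GF (A : ℤ → ℤ → ℤ) : Prop :=
  (∀ k : ℤ, A k 0 = 0) ∧ (∀ k n : ℤ, |A k n - A k (n-1)| = 1) ∧
  (∀ k : ℤ, BddAbove (A k '' Set.Iic 0)) ∧ (∀ k : ℤ, A (k+1) = Tbb (A k))

/-- Carrier value at site `n`, time `k`. -/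
noncomputable def Wc (A : ℤ → ℤ → ℤ) (n k : ℤ) : ℤ := ballMax (A k) n - A k n
/-- Increment of the path at site `n`, time `k`. -/
def Dc (A : ℤ → ℤ → ℤ) (k n : ℤ) : ℤ := A k n - A k (n-1)

lemma Wnn {A : ℤ → ℤ → ℤ} (hA : GF A) (n k : ℤ) : 0 ≤ Wc A n k := by
  have := le_ballMax (hA.2.2.1 k) (le_refl n)
  simp only [Wc]; omega

lemma Dpm {A : ℤ → ℤ → ℤ} (hA : GF A) (k n : ℤ) : Dc A k n = 1 ∨ Dc A k n = -1 :=
  pm (hA.2.1 k n)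

lemma r1 {A : ℤ → ℤ → ℤ} (hA : GF A) (n k : ℤ) :
    Wc A (n+1) k = max (Wc A n k - Dc A k (n+1)) 0 := by
  simp only [Wc, Dc]
  rw [ballMax_succ (hA.2.2.1 k) n]
  have he : n + 1 - 1 = n := by ring
  rw [he]
  rcases le_total (ballMax (A k) n) (A k (n+1)) with h | h
  · rw [max_eq_right h, max_eq_right (by omega : ballMax (A k) n - A k n - (A k (n+1) - A k n) ≤ 0)]
    omega
  · rw [max_eq_left h, max_eq_left (by omega : (0:ℤ) ≤ ballMax (A k) n - A k n - (A k (n+1) - A k n))]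
    omega

lemma r2 {A : ℤ → ℤ → ℤ} (hA : GF A) (n k : ℤ) :
    Dc A (k+1) (n+1) = 2 * max 0 (Dc A k (n+1) - Wc A n k) - Dc A k (n+1) := by
  have hrec := hA.2.2.2 k
  simp only [Dc, Wc, hrec, Tbb]
  have he : n + 1 - 1 = n := by ring
  rw [he, ballMax_succ (hA.2.2.1 k) n]
  rcases le_total (ballMax (A k) n) (A k (n+1)) with h | h
  · rw [max_eq_right h, max_eq_right (by omega : (0:ℤ) ≤ A k (n+1) - A k n - (ballMax (A k) n - A k n))]
    ring
  · rw [max_eq_left h, max_eq_left (by omega : A k (n+1) - A k n - (ballMax (A k) n - A k n) ≤ 0)]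
    ring

lemma syncD {A : ℤ → ℤ → ℤ} (hA : GF A) {n k : ℤ} (hw0 : Wc A n k = 0) :
    Dc A (k+1) (n+1) = 1 := by
  rw [r2 hA, hw0]
  rcases Dpm hA k (n+1) with h | h <;> rw [h] <;> norm_num

lemma flipD {A : ℤ → ℤ → ℤ} (hA : GF A) {n k : ℤ} (hw1 : 1 ≤ Wc A n k) :
    Dc A (k+1) (n+1) = - Dc A k (n+1) := by
  rw [r2 hA]
  rcases Dpm hA k (n+1) with h | h <;> rw [h]
  · rw [max_eq_left (by omega : (1:ℤ) - Wc A n k ≤ 0)]; ring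
  · rw [max_eq_left (by omega : (-1:ℤ) - Wc A n k ≤ 0)]; ring

/-- Determination of increments from carrier values, after a zero. -/
lemma Deq {A A' : ℤ → ℤ → ℤ} (hA : GF A) (hA' : GF A') (n : ℤ)
    (hWn : ∀ k, Wc A n k = Wc A' n k) (hodd : OddGapsBothDir (Wc A n)) :
    ∀ k, Dc A k (n+1) = Dc A' k (n+1) := by
  intro k
  obtain ⟨a, b, hbN, hgap⟩ := hodd.2 (k - 1)
  have hz : Wc A n b = 0 := hgap.2.2.1
  have hz' : Wc A' n b = 0 := by rw [← hWn b]; exact hz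
  have main : ∀ j : ℤ, b + 1 ≤ j → Dc A j (n+1) = Dc A' j (n+1) := by
    refine Int.le_induction ?_ ?_
    · rw [syncD hA hz, syncD hA' hz']
    · intro j _ ih
      rw [r2 hA, r2 hA', ih, hWn j]
  have hbk : b + 1 ≤ k := by omega
  exact main k hbk

/-- Alternation of the increment inside a gap of the carrier sequence. -/
lemma altD {A : ℤ → ℤ → ℤ} (hA : GF A) {n z : ℤ} (hz : Wc A n z = 0) :
    ∀ j, z + 1 ≤ j → (∀ i, z < i → i < j → 0 < Wc A n i) →
      Dc A j (n+1) = if Odd (j - z) then 1 else -1 := by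
  refine Int.le_induction ?_ ?_
  · intro _
    rw [if_pos (by rw [show z + 1 - z = 1 by ring]; exact odd_one)]
    exact syncD hA hz
  · intro j hj ih hint
    have hwj : 0 < Wc A n j := hint j (by omega) (by omega)
    have hflip := flipD hA (n := n) (k := j) (by omega)
    rw [hflip, ih (fun i h1 h2 => hint i h1 (by omega))]
    by_cases ho : Odd (j - z)
    · have he : ¬ Odd (j + 1 - z) := by
        rcases ho with ⟨t, ht⟩
        rintro ⟨t2, ht2⟩
        omega
      rw [if_pos ho, if_neg he]
    · have he : Odd (j + 1 - z) := by
        rcases Int.even_or_odd (j - z) with ⟨t, ht⟩ | hcon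
        · exact ⟨t, by omega⟩
        · exact absurd hcon ho
      rw [if_neg ho, if_pos he]
      norm_num

/-- The right end of an odd gap at level `n` is a zero at level `n+1`. -/
lemma gapZero {A : ℤ → ℤ → ℤ} (hA : GF A) {n z z' : ℤ}
    (hgap : OddGap (Wc A n) z z') : Wc A (n+1) z' = 0 := by
  obtain ⟨hlt, hz, hz', hint, hoddp⟩ := hgap
  have hD : Dc A z' (n+1) = 1 := by
    rw [altD hA hz z' (by omega) (fun i h1 h2 => hint i h1 h2), if_pos hoddp]
  rw [r1 hA, hz', hD]
  norm_num

/-- Two zeros at odd distance enclose an odd gap. -/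
lemma parity_gap {v : ℤ → ℤ} (hv : ∀ k, 0 ≤ v k) :
    ∀ m : ℕ, ∀ a a' : ℤ, (a' - a).toNat = m → a < a' → v a = 0 → v a' = 0 →
      Odd (a' - a) → ∃ b b', a ≤ b ∧ b' ≤ a' ∧ OddGap v b b' := by
  intro m
  induction m using Nat.strong_induction_on with
  | _ m ih =>
    intro a a' hm hlt ha ha' hodd
    by_cases hint : ∀ j, a < j → j < a' → 0 < v j
    · exact ⟨a, a', le_refl a, le_refl a', hlt, ha, ha', hint, hodd⟩
    · push_neg at hint
      obtain ⟨j, h1, h2, h3⟩ := hint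
      have hvj : v j = 0 := le_antisymm h3 (hv j)
      have hcase : Odd (j - a) ∨ Odd (a' - j) := by
        rcases Int.even_or_odd (j - a) with ⟨t, ht⟩ | ho
        · right; rcases hodd with ⟨t2, ht2⟩; exact ⟨t2 - t, by omega⟩
        · left; exact ho
      rcases hcase with ho | ho
      · obtain ⟨b, b', hb, hb', hg⟩ := ih (j - a).toNat (by omega) a j rfl h1 ha hvj ho
        exact ⟨b, b', hb, by omega, hg⟩
      · obtain ⟨b, b', hb, hb', hg⟩ := ih (a' - j).toNat (by omega) j a' rfl h2 hvj ha' ho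
        exact ⟨b, b', by omega, hb', hg⟩

/-- The next odd-gap right end after the right end of an odd gap sits at odd distance. -/
lemma next_odd {w : ℤ → ℤ} (hv : ∀ k, 0 ≤ w k) {z2 z2' y y' : ℤ}
    (hg2 : OddGap w z2 z2') (hgy : OddGap w y y') (hle : z2' ≤ y) :
    ∃ s t, z2' ≤ s ∧ t ≤ y' ∧ OddGap w s t ∧ Odd (t - z2') := by
  obtain ⟨t0, ⟨ht1, ht2, s0, hs0, hgap0⟩, hmin⟩ :=
    Int.exists_least_of_bdd
      (P := fun t => z2' < t ∧ t ≤ y' ∧ ∃ s, z2' ≤ s ∧ OddGap w s t)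
      ⟨z2', fun z hz => le_of_lt hz.1⟩
      ⟨y', lt_of_le_of_lt hle hgy.1, le_refl y', y, hle, hgy⟩
  have hst : s0 < t0 := hgap0.1
  have key : ∀ m : ℕ, ∀ u, (s0 - u).toNat = m → z2' ≤ u → u ≤ s0 → w u = 0 →
      Odd (t0 - u) := by
    intro m
    induction m using Nat.strong_induction_on with
    | _ m ih =>
      intro u hm hu1 hu2 hu0
      rcases eq_or_lt_of_le hu2 with rfl | hlt2
      · exact hgap0.2.2.2.2
      · obtain ⟨v0, ⟨hv1, hv2, hv0⟩, hminv⟩ :=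
          Int.exists_least_of_bdd (P := fun v => u < v ∧ v ≤ s0 ∧ w v = 0)
            ⟨u, fun z hz => le_of_lt hz.1⟩ ⟨s0, hlt2, le_refl s0, hgap0.2.1⟩
        have hintv : ∀ j, u < j → j < v0 → 0 < w j := by
          intro j hj1 hj2
          by_contra hcon
          have hj0 : w j = 0 := le_antisymm (by omega) (hv j)
          have := hminv j ⟨hj1, by omega, hj0⟩
          omega
        by_cases hov : Odd (v0 - u)
        · exfalso
          have hP : z2' < v0 ∧ v0 ≤ y' ∧ ∃ s, z2' ≤ s ∧ OddGap w s v0 :=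
            ⟨by omega, by omega, u, hu1, ⟨hv1, hu0, hv0, hintv, hov⟩⟩
          have := hmin v0 hP
          omega
        · have ho := ih (s0 - v0).toNat (by omega) v0 rfl (by omega) hv2 hv0
          rcases ho with ⟨t, ht⟩
          rcases Int.even_or_odd (v0 - u) with ⟨r, hr⟩ | hcon
          · exact ⟨t + r, by omega⟩
          · exact absurd hcon hov
  have hfin := key (s0 - z2').toNat z2' rfl (le_refl z2') hs0 hg2.2.2.1
  exact ⟨s0, t0, hs0, ht2, hgap0, hfin⟩

/-- Odd gaps in both directions propagate to the next level. -/
lemma oddprop {A : ℤ → ℤ → ℤ} (hA : GF A) (n : ℤ)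
    (hodd : OddGapsBothDir (Wc A n)) : OddGapsBothDir (Wc A (n+1)) := by
  have hv : ∀ k, 0 ≤ Wc A n k := fun k => Wnn hA n k
  have hv' : ∀ k, 0 ≤ Wc A (n+1) k := fun k => Wnn hA (n+1) k
  constructor
  · intro N
    obtain ⟨z2, z2', hz2N, hg2⟩ := hodd.1 N
    obtain ⟨y, y', hy, hgy⟩ := hodd.1 z2'
    obtain ⟨s, t, hs, ht, hgst, hoddt⟩ := next_odd hv hg2 hgy hy
    have h1 : Wc A (n+1) z2' = 0 := gapZero hA hg2
    have h2 : Wc A (n+1) t = 0 := gapZero hA hgst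
    have hlt : z2' < t := by have := hgst.1; omega
    obtain ⟨b, b', hb, hb', hg⟩ :=
      parity_gap hv' (t - z2').toNat z2' t rfl hlt h1 h2 hoddt
    exact ⟨b, b', by have := hg2.1; omega, hg⟩
  · intro N
    obtain ⟨y, y', hy'N, hgy⟩ := hodd.2 N
    obtain ⟨z2, z2', hz2', hg2⟩ := hodd.2 y
    obtain ⟨s, t, hs, ht, hgst, hoddt⟩ := next_odd hv hg2 hgy hz2'
    have h1 : Wc A (n+1) z2' = 0 := gapZero hA hg2
    have h2 : Wc A (n+1) t = 0 := gapZero hA hgst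
    have hlt : z2' < t := by have := hgst.1; omega
    obtain ⟨b, b', hb, hb', hg⟩ :=
      parity_gap hv' (t - z2').toNat z2' t rfl hlt h1 h2 hoddt
    exact ⟨b, b', by omega, hg⟩

/-- Core induction: carrier sequences agree at every level and keep odd gaps. -/
lemma core {A A' : ℤ → ℤ → ℤ} (hA : GF A) (hA' : GF A')
    (hw : ∀ k, Wc A 0 k = Wc A' 0 k) (hodd : OddGapsBothDir (Wc A 0)) :
    ∀ n : ℤ, 0 ≤ n → (∀ k, Wc A n k = Wc A' n k) ∧ OddGapsBothDir (Wc A n) := by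
  refine Int.le_induction ?_ ?_
  · exact ⟨hw, hodd⟩
  · intro n _ ih
    have hD := Deq hA hA' n ih.1 ih.2
    refine ⟨fun k => ?_, oddprop hA n ih.2⟩
    rw [r1 hA, r1 hA', ih.1 k, hD k]

/-- Conclusion: increments agree at all positive sites. -/
lemma core_D {A A' : ℤ → ℤ → ℤ} (hA : GF A) (hA' : GF A')
    (hw : ∀ k, Wc A 0 k = Wc A' 0 k) (hodd : OddGapsBothDir (Wc A 0)) :
    ∀ n : ℤ, 1 ≤ n → ∀ k, Dc A k n = Dc A' k n := by
  intro n hn k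
  obtain ⟨h1, h2⟩ := core hA hA' hw hodd (n-1) (by omega)
  have hD := Deq hA hA' (n-1) h1 h2 k
  rwa [show n-1+1 = n by ring] at hD

end BBS

namespace BBS

/-- Spatial reflection of a path. -/
def mir (X : ℤ → ℤ) : ℤ → ℤ := fun n => -X (-n)

lemma bddAbove_neg_image {s : Set ℤ} (h : BddBelow s) : BddAbove (Neg.neg '' s) := by
  obtain ⟨b, hb⟩ := h
  refine ⟨-b, ?_⟩
  rintro y ⟨x, hx, rfl⟩
  have := hb hx
  omega

lemma sSup_neg_image {s : Set ℤ} (hb : BddBelow s) (hne : s.Nonempty) :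
    sSup (Neg.neg '' s) = - sInf s := by
  apply le_antisymm
  · apply csSup_le (hne.image _)
    rintro y ⟨x, hx, rfl⟩
    have := csInf_le hb hx
    omega
  · have h1 : sInf s ∈ s := Int.csInf_mem hne hb
    have : - sInf s ∈ Neg.neg '' s := ⟨sInf s, h1, rfl⟩
    exact le_csSup (bddAbove_neg_image hb) this

lemma mir_image_Iic (X : ℤ → ℤ) (n : ℤ) :
    mir X '' Set.Iic n = Neg.neg '' (X '' Set.Ici (-n)) := by
  ext y
  constructor
  · rintro ⟨m, hm, rfl⟩
    have hm' : m ≤ n := hm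
    exact ⟨X (-m), ⟨-m, Set.mem_Ici.mpr (by omega), rfl⟩, rfl⟩
  · rintro ⟨x, ⟨m, hm, rfl⟩, rfl⟩
    have hm' : -n ≤ m := hm
    exact ⟨-m, Set.mem_Iic.mpr (by omega), by simp [mir]⟩

lemma mir_ballMax {X : ℤ → ℤ} (hb : BddBelow (X '' Set.Ici 0)) (n : ℤ) :
    ballMax (mir X) n = - ballMin X (-n) := by
  rw [ballMax, mir_image_Iic]
  exact sSup_neg_image (bddBelow_all hb (-n)) ⟨X (-n), -n, Set.mem_Ici.mpr (le_refl _), rfl⟩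

lemma Tbb_mir {X : ℤ → ℤ} (hb : BddBelow (X '' Set.Ici 0)) :
    Tbb (mir X) = mir (TbbInv X) := by
  funext n
  simp only [Tbb, mir, TbbInv, mir_ballMax hb]
  rw [show -(0:ℤ) = 0 by ring]
  ring

lemma oddGap_rev {w : ℤ → ℤ} {k k' : ℤ} (h : OddGap w k k') :
    OddGap (fun j => w (-j-1)) (-k'-1) (-k-1) := by
  obtain ⟨hlt, h0, h0', hint, ho⟩ := h
  refine ⟨by omega, ?_, ?_, ?_, ?_⟩
  · show w (-(-k'-1)-1) = 0
    rw [show -(-k'-1)-1 = k' by ring]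
    exact h0'
  · show w (-(-k-1)-1) = 0
    rw [show -(-k-1)-1 = k by ring]
    exact h0
  · intro j h1 h2
    show 0 < w (-j-1)
    exact hint (-j-1) (by omega) (by omega)
  · rcases ho with ⟨t, ht⟩
    exact ⟨t, by omega⟩

lemma oddGaps_rev {w : ℤ → ℤ} (h : OddGapsBothDir w) :
    OddGapsBothDir (fun j => w (-j-1)) := by
  constructor
  · intro N
    obtain ⟨k, k', hk', hgap⟩ := h.2 (-N-1)
    exact ⟨-k'-1, -k-1, by omega, oddGap_rev hgap⟩
  · intro N
    obtain ⟨k, k', hk, hgap⟩ := h.1 (-N-1)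
    exact ⟨-k'-1, -k-1, by omega, oddGap_rev hgap⟩

end BBS

namespace BBS

lemma famS_GF {S : ℤ → ℤ} (hS : inSinv S) : GF (fun k => Titer k S) :=
  ⟨fun k => (hS k).1.1, fun k n => (hS k).1.2 n, fun k => (hS k).2.1,
    fun k => Titer_succ hS k⟩

lemma famM_GF {S : ℤ → ℤ} (hS : inSinv S) : GF (fun k => mir (Titer (-k) S)) := by
  refine ⟨?_, ?_, ?_, ?_⟩
  · intro k
    show -(Titer (-k) S (-0)) = 0
    rw [neg_zero, (hS (-k)).1.1, neg_zero]
  · intro k n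
    show |mir (Titer (-k) S) n - mir (Titer (-k) S) (n-1)| = 1
    have hstep := (hS (-k)).1.2 (1 - n)
    rw [show (1:ℤ) - n - 1 = -n by ring] at hstep
    have he : mir (Titer (-k) S) n - mir (Titer (-k) S) (n-1)
        = Titer (-k) S (1-n) - Titer (-k) S (-n) := by
      simp only [mir]
      rw [show -(n-1) = 1-n by ring]
      ring
    rw [he]
    exact hstep
  · intro k
    show BddAbove ((mir (Titer (-k) S)) '' Set.Iic 0)
    rw [mir_image_Iic, neg_zero]
    exact bddAbove_neg_image (hS (-k)).2.2.1
  · intro k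
    show mir (Titer (-(k+1)) S) = Tbb (mir (Titer (-k) S))
    have h1 : Titer (-(k+1)) S = TbbInv (Titer (-k) S) := by
      have := Titer_pred hS (-k)
      rwa [show -k - 1 = -(k+1) by ring] at this
    rw [h1, Tbb_mir (hS (-k)).2.2.1]

lemma wS_eq {S : ℤ → ℤ} (hS : inSinv S) (k : ℤ) :
    Wc (fun k => Titer k S) 0 k = ballMax (Titer k S) 0 := by
  show ballMax (Titer k S) 0 - Titer k S 0 = _
  rw [(hS k).1.1]
  ring

lemma wM_eq {S : ℤ → ℤ} (hS : inSinv S) (k : ℤ) :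
    Wc (fun k => mir (Titer (-k) S)) 0 k = ballMax (Titer (-k-1) S) 0 := by
  have hz : -(Titer (-k) S (-0)) = 0 := by
    rw [neg_zero, (hS (-k)).1.1, neg_zero]
  show ballMax (mir (Titer (-k) S)) 0 - mir (Titer (-k) S) 0 = _
  have hz' : mir (Titer (-k) S) 0 = 0 := hz
  rw [hz', mir_ballMax (hS (-k)).2.2.1, neg_zero]
  have hrec : Titer (-k) S = Tbb (Titer (-k-1) S) := by
    have := Titer_succ hS (-k-1)
    rwa [show -k-1+1 = -k by ring] at this
  rw [hrec, ballMin_Tbb (hS (-k-1)) 0]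
  ring

end BBS

/-- If two configurations `η, η'` with path encodings in `𝒮^{inv}` have the
same current sequence `(w^k)_{k∈ℤ}` at the origin, and this sequence has infinitely many odd
gaps between zeros in both directions, then `η = η'`. -/
theorem stmt_11 (S S' : ℤ → ℤ) (hS : inSinv S) (hS' : inSinv S')
    (η η' : ℤ → ℤ)
    (hη : ∀ n : ℤ, η n = if S n - S (n - 1) = -1 then 1 else 0)
    (hη' : ∀ n : ℤ, η' n = if S' n - S' (n - 1) = -1 then 1 else 0)
    (hw : ∀ k : ℤ, ballMax (Titer k S) 0 = ballMax (Titer k S') 0)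
    (hodd : OddGapsBothDir (fun k => ballMax (Titer k S) 0)) :
    η = η' := by
  have hGF := BBS.famS_GF hS
  have hGF' := BBS.famS_GF hS'
  have hw0 : ∀ k, BBS.Wc (fun k => Titer k S) 0 k = BBS.Wc (fun k => Titer k S') 0 k := by
    intro k
    rw [BBS.wS_eq hS, BBS.wS_eq hS', hw k]
  have heq0 : BBS.Wc (fun k => Titer k S) 0 = fun k => ballMax (Titer k S) 0 :=
    funext fun k => BBS.wS_eq hS k
  have hodd0 : OddGapsBothDir (BBS.Wc (fun k => Titer k S) 0) := by
    rw [heq0]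
    exact hodd
  have hpos := BBS.core_D hGF hGF' hw0 hodd0
  have hGM := BBS.famM_GF hS
  have hGM' := BBS.famM_GF hS'
  have hwM : ∀ k, BBS.Wc (fun k => BBS.mir (Titer (-k) S)) 0 k
      = BBS.Wc (fun k => BBS.mir (Titer (-k) S')) 0 k := by
    intro k
    rw [BBS.wM_eq hS, BBS.wM_eq hS', hw (-k-1)]
  have heqM : BBS.Wc (fun k => BBS.mir (Titer (-k) S)) 0
      = fun k => ballMax (Titer (-k-1) S) 0 :=
    funext fun k => BBS.wM_eq hS k
  have hoddM : OddGapsBothDir (BBS.Wc (fun k => BBS.mir (Titer (-k) S)) 0) := by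
    rw [heqM]
    exact BBS.oddGaps_rev hodd
  have hneg := BBS.core_D hGM hGM' hwM hoddM
  have hdiff : ∀ n : ℤ, S n - S (n-1) = S' n - S' (n-1) := by
    intro n
    rcases le_or_gt 1 n with hn | hn
    · have h := hpos n hn 0
      simp only [BBS.Dc] at h
      rw [BBS.Titer_zero S, BBS.Titer_zero S'] at h
      exact h
    · have hm : 1 ≤ 1 - n := by omega
      have h := hneg (1-n) hm 0
      simp only [BBS.Dc] at h
      rw [neg_zero, BBS.Titer_zero S, BBS.Titer_zero S'] at h
      have key : ∀ T : ℤ → ℤ, BBS.mir T (1-n) - BBS.mir T (1-n-1) = T n - T (n-1) := by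
        intro T
        simp only [BBS.mir]
        rw [show -(1-n) = n-1 by ring, show -(1-n-1) = n by ring]
        ring
      rw [key S, key S'] at h
      exact h
  funext n
  rw [hη n, hη' n, hdiff n]
end

section
/- Let S : ℝ → ℝ be continuous with S 0 = 0 and with the set {S y : y ≤ x} bounded above for every x ∈ ℝ, and define M x = sup_{y ≤ x} S y. Suppose the pair (Y, A) satisfies: (i) Y : ℝ → ℝ is continuous, Y x ≥ 0 for all x, and liminf_{x→−∞} Y x = 0; (ii) A : ℝ → ℝ is continuous and nondecreasing; (iii) the Lebesgue–Stieltjes measure associated to A assigns zero mass to the set {x : Y x > 0}; (iv) S x = A x − Y x for all x. Then Y x = M x − S x and A x = M x for all x ∈ ℝ; moreover the pair (M − S, M) does satisfy conditions (i)–(iv). In addition, any pair (Ỹ, Ã) satisfying (ii), (iii), (iv) with Ỹ continuous and nonnegative (but not necessarily with liminf zero) satisfies M x − S x ≤ Ỹ x and M x ≤ Ã x for all x. -/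
open MeasureTheory Filter Set

namespace Stmt12Aux

noncomputable def M (S : ℝ → ℝ) (x : ℝ) : ℝ := sSup (S '' Set.Iic x)

variable {S : ℝ → ℝ}

lemma neIic (S : ℝ → ℝ) (x : ℝ) : (S '' Iic x).Nonempty := ⟨S x, x, le_refl x, rfl⟩

lemma M_mono (hBdd : ∀ x, BddAbove (S '' Iic x)) : Monotone (M S) := fun a b hab =>
  csSup_le_csSup (hBdd b) (neIic S a) (image_mono (Iic_subset_Iic.2 hab))

lemma le_M (hBdd : ∀ x, BddAbove (S '' Iic x)) (x : ℝ) : S x ≤ M S x :=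
  le_csSup (hBdd x) ⟨x, le_refl x, rfl⟩

lemma bddIcc (hBdd : ∀ x, BddAbove (S '' Iic x)) (a b : ℝ) : BddAbove (S '' Icc a b) :=
  (hBdd b).mono (image_mono Icc_subset_Iic_self)

lemma M_split (hBdd : ∀ x, BddAbove (S '' Iic x)) {a b : ℝ} (hab : a ≤ b) :
    M S b = M S a ⊔ sSup (S '' Icc a b) := by
  rw [M, ← Iic_union_Icc_eq_Iic hab, image_union,
    csSup_union (hBdd a) (neIic S a) (bddIcc hBdd a b) ((nonempty_Icc.2 hab).image S)]
  rfl

lemma M_le_max (hBdd : ∀ x, BddAbove (S '' Iic x)) {a b K : ℝ} (hab : a ≤ b)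
    (hK : ∀ t ∈ Icc a b, S t ≤ K) : M S b ≤ max (M S a) K := by
  rw [M_split hBdd hab]
  exact sup_le (le_max_left _ _)
    (le_trans (csSup_le ((nonempty_Icc.2 hab).image S)
      (by rintro _ ⟨t, ht, rfl⟩; exact hK t ht)) (le_max_right _ _))

lemma M_flat (hScont : Continuous S) (hBdd : ∀ x, BddAbove (S '' Iic x)) {a b : ℝ}
    (hab : a ≤ b) (h : ∀ t ∈ Icc a b, S t < M S t) : M S b = M S a := by
  obtain ⟨c, hc, hmax⟩ := isCompact_Icc.exists_isMaxOn (nonempty_Icc.2 hab)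
    hScont.continuousOn
  have hsup : sSup (S '' Icc a b) = S c :=
    le_antisymm (csSup_le ((nonempty_Icc.2 hab).image S)
      (by rintro _ ⟨t, ht, rfl⟩; exact hmax ht)) (le_csSup (bddIcc hBdd a b) ⟨c, hc, rfl⟩)
  have hb := M_split hBdd hab
  rw [hsup] at hb
  rcases le_total (S c) (M S a) with h1 | h1
  · rw [hb, sup_eq_left.2 h1]
  · exfalso
    have h2 : M S b ≤ S c := by rw [hb]; exact sup_le h1 le_rfl
    have h3 : S c < M S c := h c hc
    have h4 : M S c ≤ M S b := M_mono hBdd hc.2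
    linarith

lemma M_cont (hScont : Continuous S) (hBdd : ∀ x, BddAbove (S '' Iic x)) :
    Continuous (M S) := by
  rw [Metric.continuous_iff]
  intro x₀ ε hε
  have h3 : 0 < ε / 3 := by linarith
  obtain ⟨δ, hδ, hS⟩ := Metric.continuous_iff.mp hScont x₀ (ε / 3) h3
  refine ⟨δ, hδ, fun x hx => ?_⟩
  have hSx : S x - S x₀ < ε / 3 ∧ S x₀ - S x < ε / 3 := by
    have := hS x hx
    rw [Real.dist_eq, abs_sub_lt_iff] at this
    exact this
  rw [Real.dist_eq] at hx ⊢
  have hMx := le_M hBdd x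
  rcases le_total x x₀ with hle | hle
  · have h1 : M S x ≤ M S x₀ := M_mono hBdd hle
    have h2 : M S x₀ ≤ max (M S x) (S x₀ + ε / 3) := by
      refine M_le_max hBdd hle fun t ht => ?_
      have hdt : dist t x₀ < δ := by
        rw [Real.dist_eq]
        rw [abs_of_nonpos (by linarith)] at hx
        rw [abs_of_nonpos (by linarith [ht.2])]
        linarith [ht.1]
      have := hS t hdt
      rw [Real.dist_eq, abs_sub_lt_iff] at this
      linarith [this.2]
    have h5 : M S x₀ ≤ M S x + 2 * (ε / 3) := h2.trans (max_le (by linarith) (by linarith [hSx.2]))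
    rw [abs_of_nonpos (by linarith)]
    linarith
  · have h1 : M S x₀ ≤ M S x := M_mono hBdd hle
    have hMx₀ := le_M hBdd x₀
    have h2 : M S x ≤ max (M S x₀) (S x₀ + ε / 3) := by
      refine M_le_max hBdd hle fun t ht => ?_
      have hdt : dist t x₀ < δ := by
        rw [Real.dist_eq]
        rw [abs_of_nonneg (by linarith)] at hx
        rw [abs_of_nonneg (by linarith [ht.1])]
        linarith [ht.2]
      have := hS t hdt
      rw [Real.dist_eq, abs_sub_lt_iff] at this
      linarith [this.2]
    have h5 : M S x ≤ M S x₀ + ε / 3 := h2.trans (max_le (by linarith) (by linarith))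
    rw [abs_of_nonneg (by linarith)]
    linarith

/-- The Stieltjes function associated to the running maximum. -/
noncomputable def MSt (S : ℝ → ℝ) (hScont : Continuous S)
    (hBdd : ∀ x, BddAbove (S '' Iic x)) : StieltjesFunction ℝ where
  toFun := M S
  mono' := M_mono hBdd
  right_continuous' := fun x => (M_cont hScont hBdd).continuousAt.continuousWithinAt

lemma MSt_apply (hScont : Continuous S) (hBdd : ∀ x, BddAbove (S '' Iic x)) (x : ℝ) :
    MSt S hScont hBdd x = M S x := rfl

/-- The Stieltjes measure of `M` vanishes where `M > S`. -/
lemma M_measure_null (hScont : Continuous S) (hBdd : ∀ x, BddAbove (S '' Iic x))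
    (A : StieltjesFunction ℝ) (hA : ∀ x, A x = M S x) :
    A.measure {x : ℝ | 0 < M S x - S x} = 0 := by
  apply measure_null_of_locally_null
  intro x hx
  have hxU : S x < M S x := by simpa [sub_pos] using hx
  have hU : IsOpen {t : ℝ | S t < M S t} := isOpen_lt hScont (M_cont hScont hBdd)
  obtain ⟨δ, hδ, hball⟩ := Metric.isOpen_iff.mp hU x hxU
  refine ⟨Ioo (x - δ / 2) (x + δ / 2), ?_, ?_⟩
  · exact mem_nhdsWithin_of_mem_nhds (Ioo_mem_nhds (by linarith) (by linarith))
  · have hsub : Icc (x - δ / 2) (x + δ / 2) ⊆ Metric.ball x δ := by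
      intro t ht
      rw [Metric.mem_ball, Real.dist_eq, abs_lt]
      constructor <;> [linarith [ht.1]; linarith [ht.2]]
    have hflat : M S (x + δ / 2) = M S (x - δ / 2) :=
      M_flat hScont hBdd (by linarith) fun t ht => hball (hsub ht)
    have : A.measure (Ioc (x - δ / 2) (x + δ / 2)) = 0 := by
      rw [A.measure_Ioc, hA, hA, hflat, sub_self, ENNReal.ofReal_zero]
    exact measure_mono_null Ioo_subset_Ioc_self this

/-- Minimality. -/
lemma M_le (hBdd : ∀ x, BddAbove (S '' Iic x)) {Y' : ℝ → ℝ} {A' : StieltjesFunction ℝ}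
    (hY' : ∀ x, 0 ≤ Y' x) (hS : ∀ x, S x = A' x - Y' x) (x : ℝ) : M S x ≤ A' x := by
  apply csSup_le (neIic S x)
  rintro _ ⟨y, hy, rfl⟩
  have h1 := hY' y
  have h2 := hS y
  have h3 := A'.mono (mem_Iic.mp hy)
  linarith

lemma freq (hBdd : ∀ x, BddAbove (S '' Iic x)) {ε : ℝ} (hε : 0 < ε) (x : ℝ) :
    ∃ y ≤ x, M S y - S y < ε := by
  obtain ⟨z, hz, hlt⟩ := exists_lt_of_lt_csSup (neIic S x)
    (show M S x - ε < M S x by linarith)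
  obtain ⟨y, hy, rfl⟩ := hz
  exact ⟨y, mem_Iic.mp hy, by have := M_mono hBdd (mem_Iic.mp hy); linarith⟩

lemma liminf_zero (hScont : Continuous S) (hBdd : ∀ x, BddAbove (S '' Iic x)) :
    liminf (fun x : ℝ => ((M S x - S x : ℝ) : EReal)) atBot = 0 := by
  apply le_antisymm
  · apply le_of_forall_gt_imp_ge_of_dense
    intro c hc
    obtain ⟨d, hd0, hdc⟩ := exists_between hc
    lift d to ℝ using ⟨(hdc.trans_le le_top).ne, (lt_of_le_of_lt bot_le hd0).ne'⟩ with d hd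
    · have hd0' : (0 : ℝ) < d := by exact_mod_cast hd0
      refine le_trans (liminf_le_of_frequently_le' ?_) hdc.le
      rw [frequently_atBot]
      intro b
      obtain ⟨y, hy, hlt⟩ := freq hBdd hd0' b
      exact ⟨y, hy, by exact_mod_cast hlt.le⟩
  · refine le_liminf_of_le ?_ ?_
    · isBoundedDefault
    · exact Eventually.of_forall fun x => by
        have := le_M hBdd x
        exact_mod_cast sub_nonneg.2 this

/-- `D = A - M` is nonincreasing for any solution. -/
lemma D_anti (hScont : Continuous S) (hBdd : ∀ x, BddAbove (S '' Iic x))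
    {Y : ℝ → ℝ} {A : StieltjesFunction ℝ} (hY0 : ∀ x, 0 ≤ Y x)
    (hAc : Continuous fun x => A x) (hmeas : A.measure {x : ℝ | 0 < Y x} = 0)
    (hS : ∀ x, S x = A x - Y x) {a b : ℝ} (hab : a ≤ b) :
    A b - M S b ≤ A a - M S a := by
  by_contra hcon
  push_neg at hcon
  have hDc : Continuous fun t => A t - M S t := hAc.sub (M_cont hScont hBdd)
  have hD0 : ∀ t, 0 ≤ A t - M S t := fun t => sub_nonneg.2 (M_le hBdd hY0 hS t)
  set T := Icc a b ∩ (fun t => A t - M S t) ⁻¹' Iic (A a - M S a) with hT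
  have hTne : T.Nonempty := ⟨a, ⟨le_refl a, hab⟩, by simp⟩
  have hTbdd : BddAbove T := ⟨b, fun t ht => ht.1.2⟩
  have hTclosed : IsClosed T := isClosed_Icc.inter (isClosed_Iic.preimage hDc)
  have hcmem := hTclosed.csSup_mem hTne hTbdd
  set c := sSup T with hc
  have hca : A c - M S c ≤ A a - M S a := hcmem.2
  have hcb : c ≤ b := hcmem.1.2
  have hac : a ≤ c := hcmem.1.1
  have hsub : Ioc c b ⊆ {x : ℝ | 0 < Y x} := by
    intro t ht
    have htT : t ∉ T := fun h => absurd (le_csSup hTbdd h) (not_le.2 ht.1)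
    have htIcc : t ∈ Icc a b := ⟨hac.trans ht.1.le, ht.2⟩
    have hDt : A a - M S a < A t - M S t := lt_of_not_ge fun h => htT ⟨htIcc, h⟩
    have hMS := le_M hBdd t
    have hSt := hS t
    have hDa := hD0 a
    show 0 < Y t
    linarith
  have hmz : A.measure (Ioc c b) = 0 := measure_mono_null hsub hmeas
  rw [A.measure_Ioc, ENNReal.ofReal_eq_zero, sub_nonpos] at hmz
  have hM := M_mono hBdd hcb
  linarith

end Stmt12Aux

open MeasureTheory Filter

/-- Two-sided Skorokhod problem: for a continuous past-bounded `S : ℝ → ℝ`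
with `S 0 = 0` and `M x = sup_{y ≤ x} S y`, the pair `(M - S, M)` is the unique pair `(Y, A)`
with `Y` continuous nonnegative with `liminf_{x→-∞} Y x = 0`, `A` continuous nondecreasing
whose Lebesgue–Stieltjes measure vanishes on `{Y > 0}`, and `S = A - Y`; moreover `(M - S, M)`
is pointwise minimal among all such pairs (without the liminf condition). -/
theorem stmt_12 (S : ℝ → ℝ) (hScont : Continuous S) (hS0 : S 0 = 0)
    (hBdd : ∀ x : ℝ, BddAbove (S '' Set.Iic x)) :
    -- uniqueness: any solution of the Skorokhod problem equals (M - S, M)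
    (∀ (Y : ℝ → ℝ) (A : StieltjesFunction ℝ), Continuous Y → (∀ x, 0 ≤ Y x) →
      Filter.liminf (fun x : ℝ => ((Y x : ℝ) : EReal)) Filter.atBot = 0 →
      Continuous (fun x => A x) → A.measure {x : ℝ | 0 < Y x} = 0 →
      (∀ x : ℝ, S x = A x - Y x) →
      ∀ x : ℝ, Y x = sSup (S '' Set.Iic x) - S x ∧ A x = sSup (S '' Set.Iic x)) ∧
    -- existence: (M - S, M) satisfies conditions (i)-(iv)
    (∃ A : StieltjesFunction ℝ, (∀ x : ℝ, A x = sSup (S '' Set.Iic x)) ∧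
      Continuous (fun x : ℝ => sSup (S '' Set.Iic x) - S x) ∧
      (∀ x : ℝ, 0 ≤ sSup (S '' Set.Iic x) - S x) ∧
      Filter.liminf (fun x : ℝ => ((sSup (S '' Set.Iic x) - S x : ℝ) : EReal))
        Filter.atBot = 0 ∧
      Continuous (fun x => A x) ∧
      A.measure {x : ℝ | 0 < sSup (S '' Set.Iic x) - S x} = 0 ∧
      (∀ x : ℝ, S x = A x - (sSup (S '' Set.Iic x) - S x))) ∧
    -- minimality among all pairs satisfying (ii),(iii),(iv) with Ỹ continuous nonnegative
    (∀ (Y' : ℝ → ℝ) (A' : StieltjesFunction ℝ), Continuous Y' → (∀ x, 0 ≤ Y' x) →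
      Continuous (fun x => A' x) → A'.measure {x : ℝ | 0 < Y' x} = 0 →
      (∀ x : ℝ, S x = A' x - Y' x) →
      ∀ x : ℝ, sSup (S '' Set.Iic x) - S x ≤ Y' x ∧ sSup (S '' Set.Iic x) ≤ A' x) := by
  have hMdef : ∀ x : ℝ, Stmt12Aux.M S x = sSup (S '' Set.Iic x) := fun _ => rfl
  have key : ∀ (Y : ℝ → ℝ) (A : StieltjesFunction ℝ), (∀ x, 0 ≤ Y x) →
      Filter.liminf (fun x : ℝ => ((Y x : ℝ) : EReal)) Filter.atBot = 0 →
      Continuous (fun x => A x) → A.measure {x : ℝ | 0 < Y x} = 0 →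
      (∀ x : ℝ, S x = A x - Y x) → ∀ x : ℝ, A x = Stmt12Aux.M S x := by
    intro Y A hY0 hlim hAc hmeas hS x
    have hge : Stmt12Aux.M S x ≤ A x := Stmt12Aux.M_le hBdd hY0 hS x
    have hle : ∀ ε : ℝ, 0 < ε → A x - Stmt12Aux.M S x < ε := by
      intro ε hε
      obtain ⟨y, hyx, hYy⟩ : ∃ y ≤ x, Y y < ε := by
        by_contra h
        push_neg at h
        have hev : ∀ᶠ t in atBot, (ε : EReal) ≤ ((Y t : ℝ) : EReal) :=
          eventually_atBot.2 ⟨x, fun t ht => by exact_mod_cast h t ht⟩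
        have h2 : (ε : EReal) ≤ liminf (fun t : ℝ => ((Y t : ℝ) : EReal)) atBot :=
          le_liminf_of_le (by isBoundedDefault) hev
        rw [hlim] at h2
        have : ε ≤ (0 : ℝ) := by exact_mod_cast h2
        linarith
      have h1 := Stmt12Aux.D_anti hScont hBdd hY0 hAc hmeas hS hyx
      have h2 := Stmt12Aux.le_M hBdd y
      have h3 := hS y
      linarith
    have hle0 : A x - Stmt12Aux.M S x ≤ 0 := by
      by_contra h
      push_neg at h
      exact absurd (hle _ h) (lt_irrefl _)
    linarith
  refine ⟨?_, ?_, ?_⟩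
  · intro Y A hYc hY0 hlim hAc hmeas hS x
    have hA := key Y A hY0 hlim hAc hmeas hS x
    rw [hMdef] at hA
    have h3 := hS x
    exact ⟨by linarith, hA⟩
  · refine ⟨Stmt12Aux.MSt S hScont hBdd, fun x => rfl, ?_, ?_, ?_, ?_, ?_, ?_⟩
    · exact (Stmt12Aux.M_cont hScont hBdd).sub hScont
    · exact fun x => sub_nonneg.2 (Stmt12Aux.le_M hBdd x)
    · exact Stmt12Aux.liminf_zero hScont hBdd
    · exact Stmt12Aux.M_cont hScont hBdd
    · exact Stmt12Aux.M_measure_null hScont hBdd _ (fun x => rfl)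
    · intro x
      show S x = sSup (S '' Set.Iic x) - (sSup (S '' Set.Iic x) - S x)
      ring
  · intro Y' A' hY'c hY'0 hA'c hmeas hS x
    have h1 := Stmt12Aux.M_le hBdd hY'0 hS x
    rw [hMdef] at h1
    have h2 := hS x
    exact ⟨by linarith, h1⟩
end

section
/- Let μ be a probability measure on {0,1}^ℤ such that for μ-a.e. η the path encoding S(η) lies in 𝒮_{critical}. Then T_*μ = μ if and only if ι_*μ = μ, where ι is the particle–hole involution ι(η) n = 1 − η n. Moreover, if either of these conditions holds, then for μ-a.e. η one has (T η) n = 1 − η n for every n ∈ ℤ. -/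
open MeasureTheory Filter

/-- The path encoding `S(η)` of a configuration `η : ℤ → Bool`: the unique `S ∈ 𝒮⁰` with
`S n - S (n-1) = -1` if there is a particle at `n` and `+1` otherwise. -/
noncomputable def pathEncode (η : ℤ → Bool) : ℤ → ℤ := fun n =>
  if 0 ≤ n then ∑ m ∈ Finset.Ioc (0 : ℤ) n, (if η m then (-1 : ℤ) else 1)
  else -∑ m ∈ Finset.Ioc n (0 : ℤ), (if η m then (-1 : ℤ) else 1)

/-- The box-ball map on configurations, extended (measurably) to all of `{0,1}^ℤ`; it agrees
with the definition `(Tη) n = 1 ↔ (TS) n - (TS)(n-1) = -1` wherever `{S(η) n : n ≤ 0}` is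
bounded above. -/
noncomputable def Tbbs (η : ℤ → Bool) : ℤ → Bool := fun n =>
  if Tbb (pathEncode η) n - Tbb (pathEncode η) (n - 1) = -1 then true else false

/-- `S ∈ 𝒮⁺_K` for an integer `K ≥ 1` (formulated in `EReal`). -/
def inSplusK (K : ℤ) (S : ℤ → ℤ) : Prop :=
  (⨆ n : ℤ, ((⨆ m ∈ Set.Iic n, ((S m : ℝ) : EReal)) - ⨅ m ∈ Set.Ici n, ((S m : ℝ) : EReal)))
      = ((K : ℝ) : EReal) ∧
  Filter.limsup (fun n : ℤ => ((S n : ℝ) : EReal)) Filter.atTop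
      - Filter.liminf (fun n : ℤ => ((S n : ℝ) : EReal)) Filter.atTop = ((K : ℝ) : EReal)

/-- `S ∈ 𝒮⁻_K` for an integer `K ≥ 1`. -/
def inSminusK (K : ℤ) (S : ℤ → ℤ) : Prop :=
  (⨆ n : ℤ, ((⨆ m ∈ Set.Iic n, ((S m : ℝ) : EReal)) - ⨅ m ∈ Set.Ici n, ((S m : ℝ) : EReal)))
      = ((K : ℝ) : EReal) ∧
  Filter.limsup (fun n : ℤ => ((S n : ℝ) : EReal)) Filter.atBot
      - Filter.liminf (fun n : ℤ => ((S n : ℝ) : EReal)) Filter.atBot = ((K : ℝ) : EReal)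

/-- `S ∈ 𝒮_{critical}`. -/
def inScrit (S : ℤ → ℤ) : Prop :=
  (∃ K : ℤ, 1 ≤ K ∧ inSminusK K S) ∧ (∃ K : ℤ, 1 ≤ K ∧ inSplusK K S)

lemma sum_Ioc_split (f : ℤ → ℤ) {a b c : ℤ} (h1 : a ≤ b) (h2 : b ≤ c) :
    ∑ m ∈ Finset.Ioc a c, f m = ∑ m ∈ Finset.Ioc a b, f m + ∑ m ∈ Finset.Ioc b c, f m := by
  rw [← Finset.Ioc_union_Ioc_eq_Ioc h1 h2, Finset.sum_union]
  rw [Finset.disjoint_left]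
  intro x hx hx'
  simp only [Finset.mem_Ioc] at hx hx'
  omega

lemma pe_zero (η : ℤ → Bool) : pathEncode η 0 = 0 := by
  simp [pathEncode]

lemma pe_step (η : ℤ → Bool) (n : ℤ) :
    pathEncode η n = pathEncode η (n - 1) + (if η n then (-1 : ℤ) else 1) := by
  have hsingle : ∀ k : ℤ, Finset.Ioc (k - 1) k = {k} := by
    intro k; ext x; simp [Finset.mem_Ioc]; omega
  rcases le_or_gt 1 n with h1 | h1
  · have h0 : (0:ℤ) ≤ n := by omega
    have h0' : (0:ℤ) ≤ n - 1 := by omega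
    simp only [pathEncode, if_pos h0, if_pos h0']
    rw [sum_Ioc_split _ h0' (by omega : n - 1 ≤ n), hsingle n, Finset.sum_singleton]
  rcases eq_or_lt_of_le (by omega : n ≤ 0) with h2 | h2
  · subst h2
    simp only [pathEncode, if_pos le_rfl, if_neg (by omega : ¬ (0:ℤ) ≤ 0 - 1)]
    have : (0:ℤ) - 1 = -1 := by ring
    rw [this]
    have h1 : Finset.Ioc (0:ℤ) 0 = ∅ := by simp
    have h2' : Finset.Ioc (-1 : ℤ) 0 = {0} := by
      have := hsingle 0; simpa using this
    rw [h1, h2', Finset.sum_singleton, Finset.sum_empty]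
    ring
  · have h0 : ¬ (0:ℤ) ≤ n := by omega
    have h0' : ¬ (0:ℤ) ≤ n - 1 := by omega
    simp only [pathEncode, if_neg h0, if_neg h0']
    rw [sum_Ioc_split _ (by omega : n - 1 ≤ n) (by omega : n ≤ 0), hsingle n, Finset.sum_singleton]
    ring

lemma pe_step' (η : ℤ → Bool) (n : ℤ) :
    pathEncode η n - pathEncode η (n-1) = 1 ∨ pathEncode η n - pathEncode η (n-1) = -1 := by
  rcases pe_step η n with h
  by_cases hb : η n <;> simp [hb] at h <;> omega

lemma pe_neg (η : ℤ → Bool) : pathEncode (fun n => !(η n)) = fun n => -(pathEncode η n) := by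
  funext n
  have : ∀ m : ℤ, (if !(η m) then (-1:ℤ) else 1) = -(if η m then (-1:ℤ) else 1) := by
    intro m; by_cases hb : η m <;> simp [hb]
  simp only [pathEncode, this, Finset.sum_neg_distrib]
  split <;> ring

lemma ballMax_eq {S : ℤ → ℤ} {n b : ℤ} (hub : ∀ m ≤ n, S m ≤ b) (hmem : ∃ m ≤ n, S m = b) :
    ballMax S n = b := by
  obtain ⟨m, hm, hSm⟩ := hmem
  have hne : (S '' Set.Iic n).Nonempty := ⟨S n, Set.mem_image_of_mem S (Set.mem_Iic.2 le_rfl)⟩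
  have hbdd : BddAbove (S '' Set.Iic n) := by
    refine ⟨b, ?_⟩
    rintro x ⟨k, hk, rfl⟩
    exact hub k (Set.mem_Iic.1 hk)
  apply le_antisymm
  · apply csSup_le hne
    rintro x ⟨k, hk, rfl⟩
    exact hub k (Set.mem_Iic.1 hk)
  · calc b = S m := hSm.symm
      _ ≤ sSup (S '' Set.Iic n) := le_csSup hbdd (Set.mem_image_of_mem S (Set.mem_Iic.2 hm))

lemma bddAbove_Iic_of_ev {S : ℤ → ℤ} {n₀ a : ℤ} (h : ∀ m ≤ n₀, S m ≤ a) (n : ℤ) :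
    BddAbove (S '' Set.Iic n) := by
  rcases le_or_gt n n₀ with hn | hn
  · exact ⟨a, fun x ⟨k, hk, hxk⟩ => hxk ▸ h k (le_trans (Set.mem_Iic.1 hk) hn)⟩
  · have hne : (Finset.Icc n₀ n).Nonempty := ⟨n₀, by simp; omega⟩
    refine ⟨max a ((Finset.Icc n₀ n).sup' hne S), ?_⟩
    rintro x ⟨k, hk, rfl⟩
    rcases le_or_gt k n₀ with hk' | hk'
    · exact le_max_of_le_left (h k hk')
    · exact le_max_of_le_right (Finset.le_sup' S (by simp [Finset.mem_Icc]; exact ⟨le_of_lt hk', Set.mem_Iic.1 hk⟩))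

lemma ballMax_succ {S : ℤ → ℤ} (hb : ∀ k, BddAbove (S '' Set.Iic k)) (n : ℤ) :
    ballMax S n = max (S n) (ballMax S (n-1)) := by
  have hIic : Set.Iic n = insert n (Set.Iic (n-1)) := by
    ext x; simp [Set.mem_Iic]; omega
  rw [ballMax, hIic, Set.image_insert_eq, csSup_insert (hb (n-1)) ⟨S (n-1), ⟨n-1, Set.mem_Iic.2 le_rfl, rfl⟩⟩]
  rfl

lemma self_le_ballMax {S : ℤ → ℤ} (hb : ∀ k, BddAbove (S '' Set.Iic k)) {m n : ℤ} (h : m ≤ n) :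
    S m ≤ ballMax S n :=
  le_csSup (hb n) ⟨m, Set.mem_Iic.2 h, rfl⟩

/-- Increments of `Tbb (pathEncode η)` are `±1` and `pathEncode (Tbbs η)` has the same
increments. -/
lemma tbbs_step (η : ℤ → Bool) (hb : ∀ k, BddAbove (pathEncode η '' Set.Iic k)) (n : ℤ) :
    pathEncode (Tbbs η) n - pathEncode (Tbbs η) (n-1)
      = Tbb (pathEncode η) n - Tbb (pathEncode η) (n-1) := by
  set S := pathEncode η with hS
  have hTd : Tbb S n - Tbb S (n-1) = 2 * (ballMax S n - ballMax S (n-1)) - (S n - S (n-1)) := by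
    simp only [Tbb]; ring
  have hpm := pe_step' η n
  rw [← hS] at hpm
  have hstep : Tbb S n - Tbb S (n-1) = 1 ∨ Tbb S n - Tbb S (n-1) = -1 := by
    rcases le_or_gt (S n) (ballMax S (n-1)) with hc | hc
    · have : ballMax S n = ballMax S (n-1) := by rw [ballMax_succ hb n]; omega
      rw [hTd, this]
      omega
    · have h1 : ballMax S n = S n := by rw [ballMax_succ hb n]; omega
      have h2 : S (n-1) ≤ ballMax S (n-1) := self_le_ballMax hb le_rfl
      have h3 : S n - S (n-1) = 1 := by omega
      left; rw [hTd, h1]; omega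
  have hpe := pe_step (Tbbs η) n
  rcases hstep with h | h
  · have hfalse : Tbbs η n = false := by
      simp only [Tbbs, ← hS]
      rw [if_neg]; omega
    rw [h, hpe, hfalse]; simp
  · have htrue : Tbbs η n = true := by
      simp only [Tbbs, ← hS]
      rw [if_pos]; omega
    rw [h, hpe, htrue]; simp

lemma tbbs_encode (η : ℤ → Bool) (hb : ∀ k, BddAbove (pathEncode η '' Set.Iic k)) :
    ∀ n : ℤ, pathEncode (Tbbs η) n = Tbb (pathEncode η) n := by
  have h0 : pathEncode (Tbbs η) 0 = Tbb (pathEncode η) 0 := by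
    rw [pe_zero, Tbb, pe_zero]; ring
  intro n
  induction n using Int.induction_on with
  | zero => exact h0
  | succ i ih =>
      have := tbbs_step η hb (i+1)
      have he : ((i:ℤ)+1) - 1 = (i:ℤ) := by ring
      rw [he] at this
      omega
  | pred i ih =>
      have := tbbs_step η hb (-(i:ℤ))
      have he : (-(i:ℤ)) - 1 = -(i:ℤ)-1 := rfl
      rw [he] at this
      omega

lemma ereal_fin {x y : EReal} {K : ℝ} (h : x - y = (K : EReal)) :
    ∃ ur lr : ℝ, x = (ur : EReal) ∧ y = (lr : EReal) ∧ ur - lr = K := by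
  induction x using EReal.rec with
  | bot => rw [EReal.bot_sub] at h; exact absurd h.symm (EReal.coe_ne_bot K)
  | top =>
      induction y using EReal.rec with
      | bot =>
          rw [EReal.sub_bot (by simp)] at h
          exact absurd h.symm (EReal.coe_ne_top K)
      | coe r => rw [EReal.top_sub_coe] at h; exact absurd h.symm (EReal.coe_ne_top K)
      | top => rw [EReal.sub_top] at h; exact absurd h.symm (EReal.coe_ne_bot K)
  | coe r =>
      induction y using EReal.rec with
      | bot =>
          rw [EReal.sub_bot (EReal.coe_ne_bot r)] at h
          exact absurd h.symm (EReal.coe_ne_top K)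
      | coe s =>
          rw [← EReal.coe_sub] at h
          exact ⟨r, s, rfl, rfl, EReal.coe_eq_coe_iff.1 h⟩
      | top => rw [EReal.sub_top] at h; exact absurd h.symm (EReal.coe_ne_bot K)

lemma ereal_exists_le {x : EReal} (hx : x ≠ ⊥) : ∃ r : ℝ, (r : EReal) ≤ x := by
  induction x using EReal.rec with
  | bot => exact absurd rfl hx
  | coe r => exact ⟨r, le_rfl⟩
  | top => exact ⟨0, le_top⟩

lemma crit_facts {S : ℤ → ℤ} (h : inScrit S) :
    ∃ i a : ℤ, i < a ∧ (∀ k, i ≤ S k) ∧ (∀ p : ℤ, ∃ m < p, S m = i) ∧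
      (∃ n₀ : ℤ, ∀ m ≤ n₀, S m ≤ a) ∧ (∀ p : ℤ, ∃ m < p, S m = a) := by
  obtain ⟨⟨K, hK1, hKsup, hKlim⟩, -⟩ := h
  set f : ℤ → EReal := fun n => ((S n : ℝ) : EReal) with hf
  have hterm : ∀ n : ℤ, (⨆ m ∈ Set.Iic n, f m) - (⨅ m ∈ Set.Ici n, f m) ≤ ((K : ℝ) : EReal) := by
    intro n
    rw [← hKsup]
    exact le_iSup (fun n => (⨆ m ∈ Set.Iic n, f m) - ⨅ m ∈ Set.Ici n, f m) n
  obtain ⟨ur, lr, hur, hlr, hurlr⟩ := ereal_fin hKlim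
  have hIbot : ∀ n : ℤ, (⨅ m ∈ Set.Ici n, f m) ≠ ⊥ := by
    intro n hbot
    have h1 : f n ≤ ⨆ m ∈ Set.Iic n, f m := le_iSup₂ (f := fun m _ => f m) n (Set.mem_Iic.2 le_rfl)
    have h2 : (⨆ m ∈ Set.Iic n, f m) ≠ ⊥ := by
      intro hb
      rw [hb, le_bot_iff] at h1
      exact (EReal.coe_ne_bot _) h1
    have h3 := hterm n
    rw [hbot, EReal.sub_bot h2] at h3
    exact ((EReal.coe_lt_top (K : ℝ)).not_ge h3)
  have hlow : ∀ n : ℤ, ∃ c : ℤ, ∀ m, n ≤ m → c ≤ S m := by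
    intro n
    obtain ⟨x, hx⟩ := ereal_exists_le (hIbot n)
    refine ⟨⌈x⌉, fun m hm => ?_⟩
    have h1 : (⨅ m ∈ Set.Ici n, f m) ≤ f m := iInf₂_le (f := fun m _ => f m) m (Set.mem_Ici.2 hm)
    have h2 : (x : EReal) ≤ ((S m : ℝ) : EReal) := le_trans hx h1
    exact Int.ceil_le.2 (EReal.coe_le_coe_iff.1 h2)
  have hlow2 : ∃ n₁ : ℤ, ∀ m ≤ n₁, (lr - 1 : ℝ) < (S m : ℝ) := by
    have h1 : (((lr - 1 : ℝ)) : EReal) < liminf f atBot := by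
      rw [hlr]; exact_mod_cast (by linarith : lr - 1 < lr)
    have h2 := eventually_lt_of_lt_liminf h1
    rw [eventually_atBot] at h2
    obtain ⟨n₁, hn₁⟩ := h2
    exact ⟨n₁, fun m hm => EReal.coe_lt_coe_iff.1 (hn₁ m hm)⟩
  obtain ⟨n₁, hn₁⟩ := hlow2
  obtain ⟨c, hc⟩ := hlow n₁
  have hglb : ∀ k, min c (⌈lr⌉ - 1) ≤ S k := by
    intro k
    rcases le_total n₁ k with hk | hk
    · exact le_trans (min_le_left _ _) (hc k hk)
    · have h1 := hn₁ k hk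
      have h2 : ⌈lr⌉ ≤ S k + 1 := by
        apply Int.ceil_le.2
        push_cast
        linarith
      exact le_trans (min_le_right _ _) (by omega)
  obtain ⟨i, ⟨m₀, hm₀⟩, hleast⟩ := Int.exists_least_of_bdd
    (P := fun z => ∃ k, S k = z)
    ⟨min c (⌈lr⌉ - 1), fun z hz => by obtain ⟨k, hk⟩ := hz; exact hk ▸ hglb k⟩ ⟨S 0, 0, rfl⟩
  have hi : ∀ k, i ≤ S k := fun k => hleast (S k) ⟨k, rfl⟩
  have hIi : (⨅ m ∈ Set.Ici m₀, f m) = ((i : ℝ) : EReal) := by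
    apply le_antisymm
    · have h1 : (⨅ m ∈ Set.Ici m₀, f m) ≤ f m₀ :=
        iInf₂_le (f := fun m _ => f m) m₀ (Set.mem_Ici.2 le_rfl)
      simp only [hf] at h1
      rw [hm₀] at h1
      exact h1
    · apply le_iInf₂
      intro m hm
      simp only [hf]
      exact_mod_cast hi m
  have hlimsupM : limsup f atBot ≤ ⨆ m ∈ Set.Iic m₀, f m := by
    refine limsup_le_of_le (by isBoundedDefault) ?_
    rw [eventually_atBot]
    exact ⟨m₀, fun m hm => le_iSup₂ (f := fun m _ => f m) m (Set.mem_Iic.2 hm)⟩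
  have hKsub' : ur - (i : ℝ) ≤ K := by
    have h1 : ((ur : ℝ) : EReal) - ((i : ℝ) : EReal)
        ≤ (⨆ m ∈ Set.Iic m₀, f m) - (⨅ m ∈ Set.Ici m₀, f m) :=
      EReal.sub_le_sub (by rw [← hur]; exact hlimsupM) (le_of_eq hIi)
    have h2 := le_trans h1 (hterm m₀)
    rw [← EReal.coe_sub] at h2
    exact EReal.coe_le_coe_iff.1 h2
  have hilr : (i : ℝ) ≤ lr := by
    have h1 : ((i : ℝ) : EReal) ≤ liminf f atBot := by
      refine le_liminf_of_le (by isBoundedDefault) ?_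
      apply Eventually.of_forall
      intro m
      simp only [hf]
      exact_mod_cast hi m
    rw [hlr] at h1
    exact EReal.coe_le_coe_iff.1 h1
  have hlri : lr = (i : ℝ) := le_antisymm (by linarith) hilr
  have hura : ur = (i : ℝ) + (K : ℝ) := by linarith
  have hKR : (1 : ℝ) ≤ (K : ℝ) := by exact_mod_cast hK1
  refine ⟨i, i + K, by omega, hi, ?_, ?_, ?_⟩
  · -- inf attained below any p
    intro p
    have hfr : ∃ᶠ m in atBot, f m < (((i : ℝ) + 1 : ℝ) : EReal) := by
      refine frequently_lt_of_liminf_lt (by isBoundedDefault) ?_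
      rw [hlr, hlri]
      exact_mod_cast (lt_add_one (i : ℝ))
    rw [frequently_atBot] at hfr
    obtain ⟨m, hm, hfm⟩ := hfr (p - 1)
    simp only [hf] at hfm
    have h1 : (S m : ℝ) < (i : ℝ) + 1 := by exact_mod_cast hfm
    have h2 : S m < i + 1 := by exact_mod_cast h1
    exact ⟨m, by omega, le_antisymm (by omega) (hi m)⟩
  · -- eventually ≤ a at -∞
    have hev : ∀ᶠ m in atBot, f m < ((((i + K : ℤ) : ℝ) + 1 : ℝ) : EReal) := by
      refine eventually_lt_of_limsup_lt ?_ (by isBoundedDefault)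
      rw [hur]
      have : ur < ((i + K : ℤ) : ℝ) + 1 := by push_cast; linarith
      exact_mod_cast this
    rw [eventually_atBot] at hev
    obtain ⟨n₀, hn₀⟩ := hev
    refine ⟨n₀, fun m hm => ?_⟩
    have hx := hn₀ m hm
    simp only [hf] at hx
    have h1 : (S m : ℝ) < ((i + K : ℤ) : ℝ) + 1 := by exact_mod_cast hx
    have h2 : S m < (i + K) + 1 := by exact_mod_cast h1
    omega
  · -- = a frequently at -∞
    have hev : ∀ᶠ m in atBot, f m < ((((i + K : ℤ) : ℝ) + 1 : ℝ) : EReal) := by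
      refine eventually_lt_of_limsup_lt ?_ (by isBoundedDefault)
      rw [hur]
      have : ur < ((i + K : ℤ) : ℝ) + 1 := by push_cast; linarith
      exact_mod_cast this
    have hfr : ∃ᶠ m in atBot, ((((i + K : ℤ) : ℝ) - 1 : ℝ) : EReal) < f m := by
      refine frequently_lt_of_lt_limsup (by isBoundedDefault) ?_
      rw [hur]
      have : ((i + K : ℤ) : ℝ) - 1 < ur := by push_cast; linarith
      exact_mod_cast this
    have hfr2 := hfr.and_eventually hev
    rw [frequently_atBot] at hfr2
    intro p
    obtain ⟨m, hm, h1, h2⟩ := hfr2 (p - 1)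
    simp only [hf] at h1 h2
    have h1' : ((i + K : ℤ) : ℝ) - 1 < (S m : ℝ) := by exact_mod_cast h1
    have h2' : (S m : ℝ) < ((i + K : ℤ) : ℝ) + 1 := by exact_mod_cast h2
    have h3 : (i + K) - 1 < S m := by exact_mod_cast h1'
    have h4 : S m < (i + K) + 1 := by exact_mod_cast h2'
    exact ⟨m, by omega, by omega⟩

/-- Record at `q`: strict running maximum of the path encoding. -/
def RecAt (η : ℤ → Bool) (q : ℤ) : Prop := ∀ r < q, pathEncode η r < pathEncode η q

/-- With no records below `p`, the path stays `≤ a` below `p`. -/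
lemma no_rec_le {η : ℤ → Bool} {a n₀ p : ℤ}
    (hQ1 : ∀ m ≤ n₀, pathEncode η m ≤ a)
    (hnr : ∀ q < p, ¬ RecAt η q) :
    ∀ n < p, pathEncode η n ≤ a := by
  set S := pathEncode η with hS
  intro n hn
  by_contra hcon
  push_neg at hcon
  obtain ⟨m₁, ⟨hm₁n, hm₁a⟩, hleast⟩ := Int.exists_least_of_bdd
    (P := fun z => z ≤ n ∧ a < S z)
    ⟨n₀ + 1, fun z hz => by
      by_contra hzz
      exact absurd (hQ1 z (by omega)) (by omega)⟩
    ⟨n, le_rfl, hcon⟩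
  refine hnr m₁ (by omega) ?_
  intro r hr
  show S r < S m₁
  have hra : S r ≤ a := by
    by_contra hra
    exact absurd (hleast r ⟨by omega, by omega⟩) (by omega)
  omega

lemma rec_then_flip {η : ℤ → Bool} (hη : inScrit (pathEncode η)) :
    (∃ m₀ : ℤ, ∀ q ≤ m₀, ¬ RecAt η q) ∧
    ((∀ q : ℤ, ¬ RecAt η q) → ∀ n : ℤ, Tbbs η n = !(η n)) := by
  set S := pathEncode η with hS
  obtain ⟨i, a, hia, hi, hP1, ⟨n₀, hQ1⟩, hQ2⟩ := crit_facts hη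
  constructor
  · refine ⟨n₀, fun q hq hrec => ?_⟩
    obtain ⟨r, hr, hra⟩ := hQ2 q
    have h1 := hrec r hr
    rw [← hS] at h1
    have h2 := hQ1 q hq
    omega
  · intro hnr n
    have hle : ∀ m : ℤ, S m ≤ a := by
      intro m
      have := no_rec_le (p := m + 1) hQ1 (fun q _ => hnr q)
      exact this m (by omega)
    have hM : ∀ m : ℤ, ballMax S m = a := by
      intro m
      refine ballMax_eq (fun k _ => hle k) ?_
      obtain ⟨r, hr, hra⟩ := hQ2 (m + 1)
      exact ⟨r, by omega, hra⟩
    have hT : ∀ m : ℤ, Tbb S m = -(S m) := by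
      intro m
      simp only [Tbb, hM]
      ring
    have hstep := pe_step η n
    rw [← hS] at hstep
    simp only [Tbbs, ← hS, hT]
    by_cases hb : η n
    · simp only [hb, if_true] at hstep
      rw [hb, if_neg (by omega)]
      rfl
    · rw [Bool.not_eq_true] at hb
      simp only [hb, Bool.false_eq_true, if_false] at hstep
      rw [hb, if_pos (by omega)]
      rfl

lemma key_rec {η : ℤ → Bool} (hη : inScrit (pathEncode η)) {q : ℤ}
    (hrec : RecAt (Tbbs η) q) : ∃ p, p < q ∧ RecAt η p := by
  by_contra hcon
  push_neg at hcon
  obtain ⟨i, a, hia, hi, hP1, ⟨n₀, hQ1⟩, hQ2⟩ := crit_facts hη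
  have hb : ∀ k, BddAbove (pathEncode η '' Set.Iic k) := bddAbove_Iic_of_ev hQ1
  have hid := tbbs_encode η hb
  have hclaim : ∀ n < q, pathEncode η n ≤ a := no_rec_le hQ1 hcon
  have hMlt : ∀ n, n < q → ballMax (pathEncode η) n = a := by
    intro n hn
    refine ballMax_eq (fun m hm => hclaim m (by omega)) ?_
    obtain ⟨r, hr, hra⟩ := hQ2 (n + 1)
    exact ⟨r, by omega, hra⟩
  have hrec' : ∀ r, r < q → Tbb (pathEncode η) r < Tbb (pathEncode η) q := by
    intro r hr
    have h := hrec r hr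
    rwa [hid r, hid q] at h
  rcases le_or_gt (pathEncode η q) a with hqa | hqa
  · have hMq : ballMax (pathEncode η) q = a := by
      refine ballMax_eq (fun m hm => ?_) ?_
      · rcases eq_or_lt_of_le hm with he | hl
        · rw [he]; exact hqa
        · exact hclaim m hl
      · obtain ⟨r, hr, hra⟩ := hQ2 q
        exact ⟨r, by omega, hra⟩
    obtain ⟨m, hm, hmi⟩ := hP1 q
    have h1 := hrec' m hm
    have hMm := hMlt m hm
    have hiq := hi q
    simp only [Tbb, hMq, hMm] at h1
    omega
  · have hq1 : pathEncode η q ≤ a + 1 := by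
      have hs := pe_step η q
      have hq0 : pathEncode η (q-1) ≤ a := hclaim _ (by omega)
      by_cases hb' : η q <;> simp [hb'] at hs <;> omega
    have hqa1 : pathEncode η q = a + 1 := by omega
    have hMq : ballMax (pathEncode η) q = pathEncode η q := by
      refine ballMax_eq (fun m hm => ?_) ⟨q, le_rfl, rfl⟩
      rcases eq_or_lt_of_le hm with he | hl
      · rw [he]
      · exact le_trans (hclaim m hl) (by omega)
    obtain ⟨m, hm, hmi⟩ := hP1 q
    have h1 := hrec' m hm
    have hMm := hMlt m hm
    simp only [Tbb, hMq, hMm] at h1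
    omega

lemma meas_pe (n : ℤ) : Measurable fun η : ℤ → Bool => pathEncode η n := by
  have hterm : ∀ m : ℤ, Measurable (fun η : ℤ → Bool => if η m then (-1:ℤ) else 1) := by
    intro m
    have hbm : Measurable (fun b : Bool => if b then (-1:ℤ) else 1) := measurable_from_top
    exact hbm.comp (measurable_pi_apply m)
  by_cases h : (0:ℤ) ≤ n
  · simp only [pathEncode, if_pos h]
    exact Finset.measurable_sum _ (fun m _ => hterm m)
  · simp only [pathEncode, if_neg h]
    exact (Finset.measurable_sum _ (fun m _ => hterm m)).neg

lemma meas_iota : Measurable (fun (η : ℤ → Bool) (n : ℤ) => !(η n)) := by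
  refine measurable_pi_lambda _ (fun n => ?_)
  have hbn : Measurable (fun b : Bool => !b) := measurable_from_top
  exact hbn.comp (measurable_pi_apply n)

def recSet (m : ℤ) : Set (ℤ → Bool) := {η | ∃ q ≤ m, RecAt η q}

lemma recSet_meas (m : ℤ) : MeasurableSet (recSet m) := by
  have hset : recSet m = ⋃ (q : ℤ), ⋃ (_ : q ≤ m), ⋂ (r : ℤ), ⋂ (_ : r < q),
      {η : ℤ → Bool | pathEncode η r < pathEncode η q} := by
    ext η
    simp only [recSet, RecAt, Set.mem_setOf_eq, Set.mem_iUnion, Set.mem_iInter]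
    exact exists_congr fun q => by rw [exists_prop]
  rw [hset]
  exact MeasurableSet.iUnion fun q => MeasurableSet.iUnion fun _ =>
    MeasurableSet.iInter fun r => MeasurableSet.iInter fun _ =>
      measurableSet_lt (meas_pe r) (meas_pe q)

lemma main_ae (μ : Measure (ℤ → Bool)) [IsProbabilityMeasure μ]
    (hcrit : ∀ᵐ η ∂μ, inScrit (pathEncode η))
    (hT : Measure.map Tbbs μ = μ) : ∀ᵐ η ∂μ, ∀ n : ℤ, Tbbs η n = !(η n) := by
  classical
  have hnull : μ {η | ¬ inScrit (pathEncode η)} = 0 := ae_iff.1 hcrit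
  obtain ⟨N, hNsub, hNmeas, hN0⟩ := exists_measurable_superset_of_null hnull
  have haem : AEMeasurable Tbbs μ := by
    by_contra hne
    rw [Measure.map_of_not_aemeasurable hne] at hT
    have h1 : (0 : Measure (ℤ → Bool)) Set.univ = μ Set.univ := by rw [hT]
    simp [measure_univ] at h1
  have hsubset : ∀ m, Tbbs ⁻¹' (recSet m) ⊆ recSet (m - 1) ∪ N := by
    intro m η hmem
    by_cases hc : inScrit (pathEncode η)
    · left
      obtain ⟨q, hq, hrec⟩ := hmem
      obtain ⟨p, hp, hrecp⟩ := key_rec hc hrec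
      exact ⟨p, by omega, hrecp⟩
    · right; exact hNsub hc
  have hstep : ∀ m, μ (recSet m) = μ (recSet (m - 1)) := by
    intro m
    apply le_antisymm
    · calc μ (recSet m) = μ (Tbbs ⁻¹' (recSet m)) := by
            rw [← Measure.map_apply_of_aemeasurable haem (recSet_meas m), hT]
        _ ≤ μ (recSet (m-1) ∪ N) := measure_mono (hsubset m)
        _ ≤ μ (recSet (m-1)) + μ N := measure_union_le _ _
        _ = μ (recSet (m-1)) := by rw [hN0, add_zero]
    · refine measure_mono ?_
      rintro η ⟨q, hq, hr⟩
      exact ⟨q, by omega, hr⟩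
  have hconst : ∀ (k : ℕ) (m : ℤ), μ (recSet (m - k)) = μ (recSet m) := by
    intro k
    induction k with
    | zero => simp
    | succ k ih =>
        intro m
        have h1 : m - ((k:ℤ)+1) = (m - 1) - k := by ring
        push_cast
        rw [h1, ih (m-1), ← hstep m]
  have hzero : ∀ m, μ (recSet m) = 0 := by
    intro m
    have hanti : Antitone (fun k : ℕ => recSet (m - k)) := by
      intro k k' hkk η hmem
      obtain ⟨q, hq, hr⟩ := hmem
      exact ⟨q, by omega, hr⟩
    have htend := tendsto_measure_iInter_atTop (μ := μ)
      (fun k => (recSet_meas _).nullMeasurableSet) hanti ⟨0, measure_ne_top μ _⟩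
    have hint : (⋂ k : ℕ, recSet (m - k)) ⊆ N := by
      intro η hmemi
      by_cases hc : inScrit (pathEncode η)
      · exfalso
        obtain ⟨⟨m₀, hm₀⟩, -⟩ := rec_then_flip hc
        obtain ⟨k, hk⟩ : ∃ k : ℕ, m - k ≤ m₀ := ⟨(m - m₀).toNat, by omega⟩
        obtain ⟨q, hq, hr⟩ := Set.mem_iInter.1 hmemi k
        exact hm₀ q (by omega) hr
      · exact hNsub hc
    have hμint : μ (⋂ k : ℕ, recSet (m - k)) = 0 :=
      le_antisymm (le_trans (measure_mono hint) (le_of_eq hN0)) zero_le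
    rw [hμint] at htend
    have h2 : Filter.Tendsto (⇑μ ∘ fun k : ℕ => recSet (m - k)) atTop (nhds (μ (recSet m))) := by
      have he : (⇑μ ∘ fun k : ℕ => recSet (m - k)) = fun _ => μ (recSet m) :=
        funext fun k => hconst k m
      rw [he]
      exact tendsto_const_nhds
    exact tendsto_nhds_unique h2 htend
  have hnorec : ∀ᵐ η ∂μ, ∀ q : ℤ, ¬ RecAt η q := by
    have hU : μ {η | ∃ q : ℤ, RecAt η q} = 0 := by
      have hset : {η : ℤ → Bool | ∃ q : ℤ, RecAt η q} = ⋃ m : ℤ, recSet m := by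
        ext η
        constructor
        · rintro ⟨q, hr⟩
          exact Set.mem_iUnion.2 ⟨q, q, le_rfl, hr⟩
        · intro h
          obtain ⟨m, q, hq, hr⟩ := Set.mem_iUnion.1 h
          exact ⟨q, hr⟩
      rw [hset]
      exact measure_iUnion_null fun m => hzero m
    rw [ae_iff]
    have hset2 : {η : ℤ → Bool | ¬ ∀ q : ℤ, ¬ RecAt η q} = {η | ∃ q : ℤ, RecAt η q} := by
      ext η; simp
    rw [hset2]
    exact hU
  filter_upwards [hcrit, hnorec] with η hc hnr
  exact (rec_then_flip hc).2 hnr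

/-- If `μ` is a probability measure on `{0,1}^ℤ` supported on configurations
with path encoding in `𝒮_{critical}`, then `μ` is `T`-invariant iff it is invariant under the
particle–hole involution `ι(η) n = 1 - η n`; and in that case a.e. `Tη = 1 - η`. -/
theorem stmt_14 (μ : Measure (ℤ → Bool)) [IsProbabilityMeasure μ]
    (hcrit : ∀ᵐ η ∂μ, inScrit (pathEncode η)) :
    (Measure.map Tbbs μ = μ ↔
      Measure.map (fun (η : ℤ → Bool) (n : ℤ) => !(η n)) μ = μ) ∧
    (Measure.map Tbbs μ = μ → ∀ᵐ η ∂μ, ∀ n : ℤ, Tbbs η n = !(η n)) := by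
  classical
  constructor
  · constructor
    · intro hT
      have hae := main_ae μ hcrit hT
      have heq : Tbbs =ᵐ[μ] (fun (η : ℤ → Bool) (n : ℤ) => !(η n)) :=
        hae.mono fun η h => funext h
      rw [← Measure.map_congr heq]
      exact hT
    · intro hι
      have hnull : μ {η | ¬ inScrit (pathEncode η)} = 0 := ae_iff.1 hcrit
      obtain ⟨N, hNsub, hNmeas, hN0⟩ := exists_measurable_superset_of_null hnull
      have hpre : μ ((fun (η : ℤ → Bool) (n : ℤ) => !(η n)) ⁻¹' N) = 0 := by
        calc μ ((fun (η : ℤ → Bool) (n : ℤ) => !(η n)) ⁻¹' N)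
            = (Measure.map (fun (η : ℤ → Bool) (n : ℤ) => !(η n)) μ) N :=
              (Measure.map_apply meas_iota hNmeas).symm
          _ = μ N := by rw [hι]
          _ = 0 := hN0
      have hcrit2 : ∀ᵐ η ∂μ, inScrit (pathEncode (fun n => !(η n))) := by
        rw [ae_iff]
        refine le_antisymm (le_trans (measure_mono ?_) (le_of_eq hpre)) zero_le
        intro η hη
        exact hNsub hη
      have hae : ∀ᵐ η ∂μ, ∀ n, Tbbs η n = !(η n) := by
        filter_upwards [hcrit, hcrit2] with η hc hc2
        rw [pe_neg η] at hc2
        obtain ⟨i', a', -, hi', hP1', -, -⟩ := crit_facts hc2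
        have hnr : ∀ q : ℤ, ¬ RecAt η q := by
          intro q hrec
          obtain ⟨m, hm, hmi⟩ := hP1' q
          have hmi' : -(pathEncode η m) = i' := hmi
          have h2 : i' ≤ -(pathEncode η q) := hi' q
          have h1 := hrec m hm
          omega
        exact (rec_then_flip hc).2 hnr
      have heq : Tbbs =ᵐ[μ] (fun (η : ℤ → Bool) (n : ℤ) => !(η n)) :=
        hae.mono fun η h => funext h
      rw [Measure.map_congr heq]
      exact hι
  · intro hT
    exact main_ae μ hcrit hT
end
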